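/- arXiv:1808.02385 — 8 statements merged into one kernel-verified Lean document; each statement's English description precedes it below -/
import Mathlib

section
/- Let z1, z2, z3 ∈ ℂ be non-collinear and let R > 0. Then there exists a constant C > 0 (depending only on z1, z2, z3 and R) such that for all z, w ∈ ℂ with |z| ≤ R and |w| ≤ R, one has |z − w| ≤ C · max_{j=1,2,3} | |z − z_j| − |w − z_j| |. (Lipschitz stability of the phase retrieval from three distances.) -/
set_option maxHeartbeats 1000000


/-- Lipschitz stability of phase retrieval from three distances to
non-collinear points, for points in a fixed ball of radius `R`. -/
theorem phase_retrieval_lipschitz_stability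
    (z₁ z₂ z₃ : ℂ) (hnc : LinearIndependent ℝ ![z₂ - z₁, z₃ - z₁])
    (R : ℝ) (hR : 0 < R) :
    ∃ C > 0, ∀ z w : ℂ, ‖z‖ ≤ R → ‖w‖ ≤ R →
      ‖z - w‖ ≤
        C * max (max (|‖z - z₁‖ - ‖w - z₁‖|)
                     (|‖z - z₂‖ - ‖w - z₂‖|))
                (|‖z - z₃‖ - ‖w - z₃‖|) := by
  set a : ℂ := z₂ - z₁ with ha
  set b : ℂ := z₃ - z₁ with hb
  have hpair := LinearIndependent.pair_iff.mp hnc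
  set D : ℝ := a.re * b.im - a.im * b.re with hDdef
  have hD : D ≠ 0 := by
    intro h
    have h1 : b.im • a + (-a.im) • b = 0 := by
      apply Complex.ext <;>
        simp only [Complex.add_re, Complex.add_im, Complex.smul_re, Complex.smul_im,
          Complex.zero_re, Complex.zero_im, smul_eq_mul] <;> nlinarith [h]
    obtain ⟨hbim, haim⟩ := hpair _ _ h1
    have haim' : a.im = 0 := by linarith [neg_eq_zero.mp haim]
    have h2 : b.re • a + (-a.re) • b = 0 := by
      apply Complex.ext <;>
        simp only [Complex.add_re, Complex.add_im, Complex.smul_re, Complex.smul_im,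
          Complex.zero_re, Complex.zero_im, smul_eq_mul] <;> nlinarith [hbim, haim']
    obtain ⟨hbre, hare⟩ := hpair _ _ h2
    have hare' : a.re = 0 := by linarith [neg_eq_zero.mp hare]
    have : (1 : ℝ) • a + (0 : ℝ) • b = 0 := by
      apply Complex.ext <;> simp [hare', haim']
    exact one_ne_zero (hpair 1 0 this).1
  have hDpos : 0 < |D| := abs_pos.mpr hD
  set S : ℝ := |a.re| + |a.im| + |b.re| + |b.im| with hS
  set B : ℝ := 2 * R + 2 * (‖z₁‖ + ‖z₂‖ + ‖z₃‖) with hB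
  have hBpos : 0 < B := by positivity
  refine ⟨S * B / |D| + 1, by positivity, ?_⟩
  intro z w hz hw
  set e₁ := |‖z - z₁‖ - ‖w - z₁‖| with he₁
  set e₂ := |‖z - z₂‖ - ‖w - z₂‖| with he₂
  set e₃ := |‖z - z₃‖ - ‖w - z₃‖| with he₃
  set M := max (max e₁ e₂) e₃ with hM
  have hM0 : 0 ≤ M := le_trans (abs_nonneg _) (le_max_of_le_left (le_max_left _ _))
  have he₁M : e₁ ≤ M := le_max_of_le_left (le_max_left _ _)
  have he₂M : e₂ ≤ M := le_max_of_le_left (le_max_right _ _)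
  have he₃M : e₃ ≤ M := le_max_right _ _
  -- bound on |normSq (z - c) - normSq (w - c)|
  have key : ∀ (c : ℂ), |‖z - c‖ - ‖w - c‖| ≤ M →
      |Complex.normSq (z - c) - Complex.normSq (w - c)| ≤ M * (2 * R + 2 * ‖c‖) := by
    intro c hc
    have hA : ‖z - c‖ ≤ R + ‖c‖ := by
      calc ‖z - c‖ ≤ ‖z‖ + ‖c‖ := by
            simpa using norm_sub_le_norm_sub_add_norm_sub z 0 c
        _ ≤ R + ‖c‖ := by linarith
    have hW : ‖w - c‖ ≤ R + ‖c‖ := by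
      calc ‖w - c‖ ≤ ‖w‖ + ‖c‖ := by
            simpa using norm_sub_le_norm_sub_add_norm_sub w 0 c
        _ ≤ R + ‖c‖ := by linarith
    have hfac : Complex.normSq (z - c) - Complex.normSq (w - c) =
        (‖z - c‖ - ‖w - c‖) *
          (‖z - c‖ + ‖w - c‖) := by
      rw [← Complex.sq_norm, ← Complex.sq_norm]; ring
    rw [hfac, abs_mul]
    have h0 : 0 ≤ ‖z - c‖ + ‖w - c‖ := by positivity
    rw [abs_of_nonneg h0]
    apply mul_le_mul hc (by linarith) h0 hM0
  have k₁ := key z₁ he₁M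
  have k₂ := key z₂ he₂M
  have k₃ := key z₃ he₃M
  set u : ℂ := z - w with hu
  set p : ℝ := u.re * a.re + u.im * a.im with hp
  set q : ℝ := u.re * b.re + u.im * b.im with hq
  have hp2 : 2 * p = (Complex.normSq (z - z₁) - Complex.normSq (w - z₁))
      - (Complex.normSq (z - z₂) - Complex.normSq (w - z₂)) := by
    simp only [hp, hu, ha, Complex.normSq_apply, Complex.sub_re, Complex.sub_im]
    ring
  have hq2 : 2 * q = (Complex.normSq (z - z₁) - Complex.normSq (w - z₁))
      - (Complex.normSq (z - z₃) - Complex.normSq (w - z₃)) := by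
    simp only [hq, hu, hb, Complex.normSq_apply, Complex.sub_re, Complex.sub_im]
    ring
  have hpB : |p| ≤ M * B := by
    have h2p : |2 * p| ≤ M * (2 * R + 2 * ‖z₁‖) + M * (2 * R + 2 * ‖z₂‖) := by
      rw [hp2]
      exact le_trans (abs_sub _ _) (add_le_add k₁ k₂)
    rw [abs_mul] at h2p
    simp only [abs_two] at h2p
    have c₁ : M * (2 * R + 2 * ‖z₁‖) ≤ M * B := by
      apply mul_le_mul_of_nonneg_left _ hM0
      rw [hB]; linarith [norm_nonneg z₂, norm_nonneg z₃]
    have c₂ : M * (2 * R + 2 * ‖z₂‖) ≤ M * B := by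
      apply mul_le_mul_of_nonneg_left _ hM0
      rw [hB]; linarith [norm_nonneg z₁, norm_nonneg z₃]
    linarith
  have hqB : |q| ≤ M * B := by
    have h2q : |2 * q| ≤ M * (2 * R + 2 * ‖z₁‖) + M * (2 * R + 2 * ‖z₃‖) := by
      rw [hq2]
      exact le_trans (abs_sub _ _) (add_le_add k₁ k₃)
    rw [abs_mul] at h2q
    simp only [abs_two] at h2q
    have c₁ : M * (2 * R + 2 * ‖z₁‖) ≤ M * B := by
      apply mul_le_mul_of_nonneg_left _ hM0
      rw [hB]; linarith [norm_nonneg z₂, norm_nonneg z₃]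
    have c₃ : M * (2 * R + 2 * ‖z₃‖) ≤ M * B := by
      apply mul_le_mul_of_nonneg_left _ hM0
      rw [hB]; linarith [norm_nonneg z₁, norm_nonneg z₂]
    linarith
  have hre : u.re * D = p * b.im - q * a.im := by
    simp only [hp, hq, hDdef]; ring
  have him : u.im * D = q * a.re - p * b.re := by
    simp only [hp, hq, hDdef]; ring
  have hre' : |u.re| * |D| ≤ M * B * (|b.im| + |a.im|) := by
    rw [← abs_mul, hre]
    calc |p * b.im - q * a.im| ≤ |p * b.im| + |q * a.im| := abs_sub _ _
      _ = |p| * |b.im| + |q| * |a.im| := by rw [abs_mul, abs_mul]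
      _ ≤ M * B * |b.im| + M * B * |a.im| :=
          add_le_add (mul_le_mul_of_nonneg_right hpB (abs_nonneg _))
            (mul_le_mul_of_nonneg_right hqB (abs_nonneg _))
      _ = M * B * (|b.im| + |a.im|) := by ring
  have him' : |u.im| * |D| ≤ M * B * (|a.re| + |b.re|) := by
    rw [← abs_mul, him]
    calc |q * a.re - p * b.re| ≤ |q * a.re| + |p * b.re| := abs_sub _ _
      _ = |q| * |a.re| + |p| * |b.re| := by rw [abs_mul, abs_mul]
      _ ≤ M * B * |a.re| + M * B * |b.re| :=
          add_le_add (mul_le_mul_of_nonneg_right hqB (abs_nonneg _))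
            (mul_le_mul_of_nonneg_right hpB (abs_nonneg _))
      _ = M * B * (|a.re| + |b.re|) := by ring
  have habsu : ‖u‖ ≤ |u.re| + |u.im| := Complex.norm_le_abs_re_add_abs_im u
  have h5 : ‖u‖ * |D| ≤ S * B * M := by
    calc ‖u‖ * |D| ≤ (|u.re| + |u.im|) * |D| :=
          mul_le_mul_of_nonneg_right habsu (abs_nonneg D)
      _ = |u.re| * |D| + |u.im| * |D| := by ring
      _ ≤ M * B * (|b.im| + |a.im|) + M * B * (|a.re| + |b.re|) := add_le_add hre' him'
      _ = S * B * M := by rw [hS]; ring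
  have h6 : ‖u‖ ≤ S * B / |D| * M := by
    rw [div_mul_eq_mul_div, le_div_iff₀ hDpos]
    exact h5
  calc ‖u‖ ≤ S * B / |D| * M := h6
    _ ≤ (S * B / |D| + 1) * M := by nlinarith [hM0]
end

section
/- Let τ1, τ2, τ3 ∈ ℂ be non-collinear and let M > 0. Then there exists a constant C > 0 (depending only on τ1, τ2, τ3 and M) such that: for all a, b ∈ ℂ with |a| ≤ M and |b| ≤ M, all w ∈ ℂ with |w| = 1, and all ε ≥ 0, if | |a + τ_j w| − |b + τ_j w| | ≤ ε for j = 1, 2, 3, then |a − b| ≤ C ε. (Lipschitz stability of phase retrieval for far field data: with a = u∞_S(x̂,k), b the retrieved value, and w = e^{−ik⟨x̂,z0⟩}, noisy phaseless far field data of level ε yield phased far field data accurate to level Cε, uniformly in x̂ and k.) -/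
open Complex

/-- From linear independence of two complex numbers over ℝ, the determinant
of their real/imaginary parts is nonzero. -/
lemma det_ne_zero_of_li (v₁ v₂ : ℂ) (h : LinearIndependent ℝ ![v₁, v₂]) :
    v₁.re * v₂.im - v₂.re * v₁.im ≠ 0 := by
  intro hD
  rw [LinearIndependent.pair_iff] at h
  have h1 : v₂.im • v₁ + (-v₁.im) • v₂ = 0 := by
    apply Complex.ext <;>
      simp [Complex.real_smul, Complex.mul_re, Complex.mul_im] <;> nlinarith
  obtain ⟨e1, e2⟩ := h _ _ h1
  have e2' : v₁.im = 0 := by linarith [neg_eq_zero.mp e2]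
  have h2 : v₂.re • v₁ + (-v₁.re) • v₂ = 0 := by
    apply Complex.ext <;>
      simp [Complex.real_smul, Complex.mul_re, Complex.mul_im, e1, e2'] <;> nlinarith
  obtain ⟨f1, f2⟩ := h _ _ h2
  have f2' : v₁.re = 0 := by linarith [neg_eq_zero.mp f2]
  have hv1 : v₁ = 0 := Complex.ext f2' e2'
  have := h 1 0 (by simp [hv1])
  exact one_ne_zero this.1

/-- Inverse estimate: if the determinant is nonzero, a complex number is
controlled by the two real pairings. -/
lemma inverse_estimate (v₁ v₂ : ℂ) (hD : v₁.re * v₂.im - v₂.re * v₁.im ≠ 0) :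
    ∃ c > 0, ∀ z : ℂ,
      ‖z‖ ≤ c * max |(z * (starRingEnd ℂ) v₁).re| |(z * (starRingEnd ℂ) v₂).re| := by
  set D := v₁.re * v₂.im - v₂.re * v₁.im with hDdef
  set S := |v₁.re| + |v₁.im| + |v₂.re| + |v₂.im| with hSdef
  have hDpos : 0 < |D| := abs_pos.mpr hD
  have hSpos : 0 < S := by
    by_contra hS
    push_neg at hS
    have h1 : |v₁.re| = 0 ∧ |v₁.im| = 0 ∧ |v₂.re| = 0 ∧ |v₂.im| = 0 := by
      constructor
      · nlinarith [abs_nonneg v₁.re, abs_nonneg v₁.im, abs_nonneg v₂.re, abs_nonneg v₂.im]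
      constructor
      · nlinarith [abs_nonneg v₁.re, abs_nonneg v₁.im, abs_nonneg v₂.re, abs_nonneg v₂.im]
      constructor
      · nlinarith [abs_nonneg v₁.re, abs_nonneg v₁.im, abs_nonneg v₂.re, abs_nonneg v₂.im]
      · nlinarith [abs_nonneg v₁.re, abs_nonneg v₁.im, abs_nonneg v₂.re, abs_nonneg v₂.im]
    obtain ⟨a1, a2, a3, a4⟩ := h1
    apply hD
    rw [hDdef]
    have := abs_eq_zero.mp a1
    have := abs_eq_zero.mp a2
    have := abs_eq_zero.mp a3
    have := abs_eq_zero.mp a4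
    nlinarith
  refine ⟨S / |D|, div_pos hSpos hDpos, fun z => ?_⟩
  set p := (z * (starRingEnd ℂ) v₁).re with hp
  set q := (z * (starRingEnd ℂ) v₂).re with hq
  set m := max |p| |q| with hm
  have hpm : |p| ≤ m := le_max_left _ _
  have hqm : |q| ≤ m := le_max_right _ _
  have hm0 : 0 ≤ m := le_trans (abs_nonneg p) hpm
  -- key identities
  have id1 : z.re * D = p * v₂.im - q * v₁.im := by
    simp only [hp, hq, Complex.mul_re, Complex.conj_re, Complex.conj_im, hDdef]
    ring
  have id2 : z.im * D = q * v₁.re - p * v₂.re := by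
    simp only [hp, hq, Complex.mul_re, Complex.conj_re, Complex.conj_im, hDdef]
    ring
  have b1 : |z.re| * |D| ≤ m * (|v₁.im| + |v₂.im|) := by
    rw [← abs_mul, id1]
    calc |p * v₂.im - q * v₁.im| ≤ |p * v₂.im| + |q * v₁.im| := abs_sub _ _
      _ = |p| * |v₂.im| + |q| * |v₁.im| := by rw [abs_mul, abs_mul]
      _ ≤ m * (|v₁.im| + |v₂.im|) := by nlinarith [abs_nonneg v₂.im, abs_nonneg v₁.im]
  have b2 : |z.im| * |D| ≤ m * (|v₁.re| + |v₂.re|) := by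
    rw [← abs_mul, id2]
    calc |q * v₁.re - p * v₂.re| ≤ |q * v₁.re| + |p * v₂.re| := abs_sub _ _
      _ = |q| * |v₁.re| + |p| * |v₂.re| := by rw [abs_mul, abs_mul]
      _ ≤ m * (|v₁.re| + |v₂.re|) := by nlinarith [abs_nonneg v₁.re, abs_nonneg v₂.re]
  have habs : ‖z‖ ≤ |z.re| + |z.im| := Complex.norm_le_abs_re_add_abs_im z
  rw [div_mul_eq_mul_div, le_div_iff₀ hDpos]
  calc ‖z‖ * |D| ≤ (|z.re| + |z.im|) * |D| :=
        mul_le_mul_of_nonneg_right habs (le_of_lt hDpos)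
    _ = |z.re| * |D| + |z.im| * |D| := by ring
    _ ≤ m * (|v₁.im| + |v₂.im|) + m * (|v₁.re| + |v₂.re|) := add_le_add b1 b2
    _ = S * m := by rw [hSdef]; ring

/-- Polarization-type identity. -/
lemma normSq_diff (a b c : ℂ) :
    Complex.normSq (a + c) - Complex.normSq (b + c) =
      Complex.normSq a - Complex.normSq b + 2 * ((a - b) * (starRingEnd ℂ) c).re := by
  simp only [Complex.normSq_apply, Complex.add_re, Complex.add_im, Complex.mul_re,
    Complex.sub_re, Complex.sub_im, Complex.conj_re, Complex.conj_im]
  ring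

/-- Lipschitz stability of phase retrieval for far field data: with
non-collinear scattering strengths `τ₁, τ₂, τ₃`, noisy phaseless data of
level `ε` determine the phased value up to `C·ε`, uniformly over all
unimodular factors `w`. -/
theorem phase_retrieval_farfield_stability
    (τ₁ τ₂ τ₃ : ℂ) (hnc : LinearIndependent ℝ ![τ₂ - τ₁, τ₃ - τ₁])
    (M : ℝ) (hM : 0 < M) :
    ∃ C > 0, ∀ a b : ℂ, ‖a‖ ≤ M → ‖b‖ ≤ M →
      ∀ w : ℂ, ‖w‖ = 1 → ∀ ε : ℝ, 0 ≤ ε →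
      (|‖a + τ₁ * w‖ - ‖b + τ₁ * w‖| ≤ ε) →
      (|‖a + τ₂ * w‖ - ‖b + τ₂ * w‖| ≤ ε) →
      (|‖a + τ₃ * w‖ - ‖b + τ₃ * w‖| ≤ ε) →
      ‖a - b‖ ≤ C * ε := by
  have hD := det_ne_zero_of_li _ _ hnc
  obtain ⟨c, hc, hest⟩ := inverse_estimate _ _ hD
  set B := M + (‖τ₁‖ + ‖τ₂‖ + ‖τ₃‖) with hB
  have hBpos : 0 < B := by
    have := norm_nonneg τ₁
    have := norm_nonneg τ₂
    have := norm_nonneg τ₃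
    rw [hB]; linarith
  refine ⟨2 * c * B, by positivity, fun a b ha hb w hw ε hε h1 h2 h3 => ?_⟩
  -- bound |normSq(a+τw) - normSq(b+τw)| ≤ 2Bε for each τ
  have key : ∀ τ : ℂ, ‖τ‖ ≤ B - M →
      |‖a + τ * w‖ - ‖b + τ * w‖| ≤ ε →
      |Complex.normSq (a + τ * w) - Complex.normSq (b + τ * w)| ≤ 2 * B * ε := by
    intro τ hτ hdiff
    set x := ‖a + τ * w‖ with hx
    set y := ‖b + τ * w‖ with hy
    have hx0 : 0 ≤ x := norm_nonneg _
    have hy0 : 0 ≤ y := norm_nonneg _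
    have hxB : x ≤ B := by
      calc x ≤ ‖a‖ + ‖τ * w‖ := norm_add_le _ _
        _ = ‖a‖ + ‖τ‖ * ‖w‖ := by rw [norm_mul]
        _ ≤ M + (B - M) * 1 := by
            apply add_le_add ha
            rw [hw, mul_one, mul_one]
            exact hτ
        _ = B := by ring
    have hyB : y ≤ B := by
      calc y ≤ ‖b‖ + ‖τ * w‖ := norm_add_le _ _
        _ = ‖b‖ + ‖τ‖ * ‖w‖ := by rw [norm_mul]
        _ ≤ M + (B - M) * 1 := by
            apply add_le_add hb
            rw [hw, mul_one, mul_one]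
            exact hτ
        _ = B := by ring
    have hns : Complex.normSq (a + τ * w) - Complex.normSq (b + τ * w) = (x - y) * (x + y) := by
      rw [hx, hy, ← Complex.sq_norm, ← Complex.sq_norm]
      ring
    rw [hns, abs_mul]
    have : |x + y| ≤ 2 * B := by
      rw [_root_.abs_of_nonneg (by linarith : (0:ℝ) ≤ x + y)]; linarith
    calc |x - y| * |x + y| ≤ ε * (2 * B) := by
          apply mul_le_mul hdiff this (abs_nonneg _) hε
      _ = 2 * B * ε := by ring
  have hτ1 : ‖τ₁‖ ≤ B - M := by
    have := norm_nonneg τ₂; have := norm_nonneg τ₃; rw [hB]; linarith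
  have hτ2 : ‖τ₂‖ ≤ B - M := by
    have := norm_nonneg τ₁; have := norm_nonneg τ₃; rw [hB]; linarith
  have hτ3 : ‖τ₃‖ ≤ B - M := by
    have := norm_nonneg τ₁; have := norm_nonneg τ₂; rw [hB]; linarith
  have k1 := key τ₁ hτ1 h1
  have k2 := key τ₂ hτ2 h2
  have k3 := key τ₃ hτ3 h3
  -- set z' = (a-b) * conj w
  set z := (a - b) * (starRingEnd ℂ) w with hz
  have habsz : ‖z‖ = ‖a - b‖ := by
    rw [hz, norm_mul, Complex.norm_conj, hw, mul_one]
  -- pairing identities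
  have pair : ∀ τ : ℂ,
      2 * ((a - b) * (starRingEnd ℂ) (τ * w)).re =
      (Complex.normSq (a + τ * w) - Complex.normSq (b + τ * w)) -
        (Complex.normSq a - Complex.normSq b) := by
    intro τ
    rw [normSq_diff a b (τ * w)]
    ring
  have conj_split : ∀ τ : ℂ, (a - b) * (starRingEnd ℂ) (τ * w) = z * (starRingEnd ℂ) τ := by
    intro τ
    rw [hz, map_mul]
    ring
  have bnd : ∀ τ τ' : ℂ,
      2 * ((a - b) * (starRingEnd ℂ) (τ * w)).re - 2 * ((a - b) * (starRingEnd ℂ) (τ' * w)).re =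
      2 * (z * (starRingEnd ℂ) (τ - τ')).re := by
    intro τ τ'
    rw [conj_split, conj_split, map_sub]
    simp only [mul_sub, Complex.sub_re]
    try ring
  -- bound the pairings with v₁ = τ₂ - τ₁, v₂ = τ₃ - τ₁
  have p2 : |(z * (starRingEnd ℂ) (τ₂ - τ₁)).re| ≤ 2 * B * ε := by
    have e : 2 * (z * (starRingEnd ℂ) (τ₂ - τ₁)).re =
        (Complex.normSq (a + τ₂ * w) - Complex.normSq (b + τ₂ * w)) -
          (Complex.normSq (a + τ₁ * w) - Complex.normSq (b + τ₁ * w)) := by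
      rw [← bnd τ₂ τ₁, pair τ₂, pair τ₁]
      try ring
    have : |2 * (z * (starRingEnd ℂ) (τ₂ - τ₁)).re| ≤ 2 * B * ε + 2 * B * ε := by
      rw [e]
      exact le_trans (abs_sub _ _) (add_le_add k2 k1)
    rw [abs_mul, _root_.abs_two] at this
    linarith
  have p3 : |(z * (starRingEnd ℂ) (τ₃ - τ₁)).re| ≤ 2 * B * ε := by
    have e : 2 * (z * (starRingEnd ℂ) (τ₃ - τ₁)).re =
        (Complex.normSq (a + τ₃ * w) - Complex.normSq (b + τ₃ * w)) -
          (Complex.normSq (a + τ₁ * w) - Complex.normSq (b + τ₁ * w)) := by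
      rw [← bnd τ₃ τ₁, pair τ₃, pair τ₁]
      try ring
    have : |2 * (z * (starRingEnd ℂ) (τ₃ - τ₁)).re| ≤ 2 * B * ε + 2 * B * ε := by
      rw [e]
      exact le_trans (abs_sub _ _) (add_le_add k3 k1)
    rw [abs_mul, _root_.abs_two] at this
    linarith
  have := hest z
  rw [habsz] at this
  calc ‖a - b‖
      ≤ c * max |(z * (starRingEnd ℂ) (τ₂ - τ₁)).re| |(z * (starRingEnd ℂ) (τ₃ - τ₁)).re| := this
    _ ≤ c * (2 * B * ε) := by
        apply mul_le_mul_of_nonneg_left _ (le_of_lt hc)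
        exact max_le p2 p3
    _ = 2 * c * B * ε := by ring
end

section
/- Let n ∈ {2, 3}, let 0 < k_min < k_max, let f1, f2 : ℝ^n → ℂ be integrable with compact support, and let g : ℝ → ℂ be continuous on (k_min, k_max) and not identically zero there. If g(k) u∞_{f1}(x̂, k) = g(k) u∞_{f2}(x̂, k) for all unit vectors x̂ ∈ ℝ^n and all k ∈ (k_min, k_max), then f1 = f2 almost everywhere. (Uniqueness for the inverse source problem with phased multi-frequency far field data.) -/
open MeasureTheory
open scoped RealInnerProductSpace

section Aux
open Complex Filter SchwartzMap
open scoped Topology FourierTransform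

lemma norm_cexp_neg_I_mul (z : ℂ) (t : ℝ) :
    ‖Complex.exp (-(Complex.I * z * (t : ℂ)))‖ = Real.exp (z.im * t) := by
  rw [Complex.norm_exp]
  congr 1
  simp [Complex.mul_re, Complex.mul_im]

end Aux

/-- The far field pattern of the source with spatial part `f`:
`u∞_f(x̂, k) = ∫ e^{-ik⟨x̂,y⟩} f(y) dy`. -/
noncomputable def farField {n : ℕ} (f : EuclideanSpace ℝ (Fin n) → ℂ)
    (xhat : EuclideanSpace ℝ (Fin n)) (k : ℝ) : ℂ :=
  ∫ y, Complex.exp (-(Complex.I * (k : ℂ) * ((⟪xhat, y⟫ : ℝ) : ℂ))) * f y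

section Aux2
open Complex Filter SchwartzMap
open scoped Topology FourierTransform

lemma entire_aux {V : Type*} [NormedAddCommGroup V] [InnerProductSpace ℝ V]
    [MeasurableSpace V] [BorelSpace V] {μ : Measure V}
    (d : V → ℂ) (hd : Integrable d μ) (t : V → ℝ) (ht : Continuous t) (R : ℝ) (hR0 : 0 ≤ R)
    (hR : ∀ y, d y ≠ 0 → |t y| ≤ R) :
    Differentiable ℂ (fun z : ℂ => ∫ y, Complex.exp (-(Complex.I * z * (t y : ℂ))) * d y ∂μ) := by
  intro z₀
  set F : ℂ → V → ℂ := fun z y => Complex.exp (-(Complex.I * z * (t y : ℂ))) * d y with hF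
  set F' : ℂ → V → ℂ := fun z y =>
    Complex.exp (-(Complex.I * z * (t y : ℂ))) * -(Complex.I * 1 * (t y : ℂ)) * d y with hF'
  have hmeas : ∀ z : ℂ, AEStronglyMeasurable (F z) μ := by
    intro z
    exact ((((continuous_const.mul (Complex.continuous_ofReal.comp ht)).neg).cexp).aestronglyMeasurable).mul hd.1
  have hbd : ∀ z y, d y ≠ 0 → ‖F z y‖ ≤ Real.exp (|z.im| * R) * ‖d y‖ := by
    intro z y hy
    rw [hF, norm_mul, norm_cexp_neg_I_mul]
    apply mul_le_mul_of_nonneg_right _ (norm_nonneg _)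
    apply Real.exp_le_exp.2
    calc z.im * t y ≤ |z.im * t y| := le_abs_self _
    _ = |z.im| * |t y| := abs_mul _ _
    _ ≤ |z.im| * R := mul_le_mul_of_nonneg_left (hR y hy) (abs_nonneg _)
  have key := hasDerivAt_integral_of_dominated_loc_of_deriv_le (F := F) (F' := F')
      (x₀ := z₀) (bound := fun y => (Real.exp ((|z₀.im| + 1) * R) * R) * ‖d y‖)
      (μ := μ) (Metric.ball_mem_nhds z₀ zero_lt_one)
      (Filter.Eventually.of_forall hmeas) ?_ ?_ ?_ ?_ ?_
  · exact key.2.differentiableAt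
  · apply Integrable.mono' (hd.norm.const_mul (Real.exp (|z₀.im| * R))) (hmeas z₀)
    filter_upwards with y
    by_cases hy : d y = 0
    · simp [hF, hy, mul_nonneg (Real.exp_nonneg _) (norm_nonneg _)]
    · exact hbd z₀ y hy
  · exact ((((((continuous_const.mul (Complex.continuous_ofReal.comp ht)).neg).cexp).mul
      ((continuous_const.mul (Complex.continuous_ofReal.comp ht)).neg)).aestronglyMeasurable)).mul hd.1
  · filter_upwards with y
    intro z hz
    by_cases hy : d y = 0
    · simp only [hF', hy, mul_zero, norm_zero]
      positivity
    · rw [hF', norm_mul, norm_mul, norm_cexp_neg_I_mul]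
      have h1 : ‖-(Complex.I * 1 * ((t y : ℝ) : ℂ))‖ = |t y| := by
        simp
      rw [h1]
      have h2 : z.im * t y ≤ (|z₀.im| + 1) * R := by
        have him : |z.im| ≤ |z₀.im| + 1 := by
          have := Complex.abs_im_le_norm (z - z₀)
          have hzz : ‖z - z₀‖ < 1 := by
            simpa [Complex.dist_eq] using Metric.mem_ball.1 hz
          simp only [Complex.sub_im] at this
          calc |z.im| ≤ |z.im - z₀.im| + |z₀.im| := by
                linarith [abs_sub_abs_le_abs_sub z.im z₀.im, le_abs_self (z.im - z₀.im)]
          _ ≤ |z₀.im| + 1 := by linarith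
        calc z.im * t y ≤ |z.im| * |t y| := by
              calc z.im * t y ≤ |z.im * t y| := le_abs_self _
              _ = |z.im| * |t y| := abs_mul _ _
        _ ≤ (|z₀.im| + 1) * R := by
            apply mul_le_mul him (hR y hy) (abs_nonneg _) (by positivity)
      calc Real.exp (z.im * t y) * |t y| * ‖d y‖
          ≤ Real.exp ((|z₀.im| + 1) * R) * R * ‖d y‖ := by
            apply mul_le_mul _ le_rfl (norm_nonneg _) (by positivity)
            exact mul_le_mul (Real.exp_le_exp.2 h2) (hR y hy) (abs_nonneg _) (Real.exp_nonneg _)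
      _ = _ := rfl
  · exact (hd.norm.const_mul _)
  · filter_upwards with y
    intro z hz
    have h := ((((hasDerivAt_id z).const_mul Complex.I).mul_const ((t y : ℝ) : ℂ)).neg.cexp).mul_const (d y)
    convert h using 1
    all_goals rfl

lemma entire_zero_of_zero_on_Ioo {F : ℂ → ℂ} (hF : Differentiable ℂ F) {a b : ℝ} (hab : a < b)
    (h0 : ∀ x : ℝ, x ∈ Set.Ioo a b → F (x : ℂ) = 0) : ∀ z : ℂ, F z = 0 := by
  have hA : AnalyticOnNhd ℂ F Set.univ := analyticOnNhd_univ_iff_differentiable.2 hF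
  set c : ℝ := (a + b) / 2 with hc
  set u : ℕ → ℂ := fun m => ((c + (b - a) / (2 * (m + 2)) : ℝ) : ℂ) with hu
  have hba : (0:ℝ) < b - a := by linarith
  have hmem : ∀ m : ℕ, (c + (b - a) / (2 * (m + 2))) ∈ Set.Ioo a b := by
    intro m
    have hm0 : (0:ℝ) ≤ (m : ℝ) := Nat.cast_nonneg m
    have hm2 : (2 : ℝ) ≤ (m : ℝ) + 2 := by linarith
    have h1 : (0 : ℝ) < (b - a) / (2 * (m + 2)) := div_pos hba (by linarith)
    have h2 : (b - a) / (2 * (m + 2)) ≤ (b - a) / 4 := by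
      apply div_le_div_of_nonneg_left (by linarith) (by norm_num) ?_
      nlinarith
    constructor
    · simp only [hc]; nlinarith
    · simp only [hc]; nlinarith
  have htend : Tendsto u atTop (𝓝[≠] (c : ℂ)) := by
    apply tendsto_nhdsWithin_of_tendsto_nhds_of_eventually_within
    · have h1 : Tendsto (fun m : ℕ => c + (b - a) / (2 * (m + 2))) atTop (𝓝 c) := by
        have h2 : Tendsto (fun m : ℕ => (2 : ℝ) * (m + 2)) atTop atTop := by
          apply Tendsto.const_mul_atTop two_pos
          exact tendsto_atTop_add_const_right _ 2 tendsto_natCast_atTop_atTop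
        have := Tendsto.div_atTop (tendsto_const_nhds (x := b - a)) h2
        simpa using tendsto_const_nhds.add this
      exact (Complex.continuous_ofReal.tendsto c).comp h1
    · filter_upwards with m
      have hm0 : (0:ℝ) ≤ (m : ℝ) := Nat.cast_nonneg m
      have h1 : (0 : ℝ) < (b - a) / (2 * (m + 2)) := div_pos hba (by linarith)
      simp only [hu, Set.mem_compl_iff, Set.mem_singleton_iff]
      intro h
      have := Complex.ofReal_injective h
      linarith
  have hfreq : ∃ᶠ z in 𝓝[≠] (c : ℂ), F z = 0 :=
    htend.frequently (Eventually.of_forall fun m => h0 _ (hmem m)).frequently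
  intro z
  exact hA.eqOn_zero_of_preconnected_of_frequently_eq_zero isPreconnected_univ
    (Set.mem_univ (c : ℂ)) hfreq (Set.mem_univ z)

noncomputable def mySchwartz {E F : Type*} [NormedAddCommGroup E] [NormedSpace ℝ E]
    [NormedAddCommGroup F] [NormedSpace ℝ F]
    (g : E → F) (hsmooth : ContDiff ℝ (⊤ : ℕ∞) g) (hsupp : HasCompactSupport g) :
    SchwartzMap E F where
  toFun := g
  smooth' := hsmooth
  decay' := by
    intro k m
    have h1 : Continuous fun x => ‖x‖ ^ k * ‖iteratedFDeriv ℝ m g x‖ :=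
      (continuous_norm.pow k).mul (hsmooth.continuous_iteratedFDeriv (by exact_mod_cast le_top)).norm
    have h2 : HasCompactSupport fun x => ‖x‖ ^ k * ‖iteratedFDeriv ℝ m g x‖ :=
      ((hsupp.iteratedFDeriv m).norm).mul_left
    obtain ⟨C, hC⟩ := h1.bounded_above_of_compact_support h2
    refine ⟨C, fun x => ?_⟩
    have := hC x
    rwa [Real.norm_eq_abs, _root_.abs_of_nonneg (by positivity)] at this

lemma ae_zero_of_fourier_zero {V : Type*} [NormedAddCommGroup V] [InnerProductSpace ℝ V]
    [MeasurableSpace V] [BorelSpace V] [FiniteDimensional ℝ V]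
    (d : V → ℂ) (hd : Integrable d)
    (h : ∀ w, 𝓕 d w = 0) : d =ᵐ[volume] 0 := by
  apply ae_eq_zero_of_integral_contDiff_smul_eq_zero hd.locallyIntegrable
  intro g hgs hgc
  set gC : SchwartzMap V ℂ := mySchwartz (fun x => (g x : ℂ))
    (Complex.ofRealCLM.contDiff.comp hgs)
    (hgc.comp_left (g := fun r : ℝ => (r : ℂ)) Complex.ofReal_zero) with hgC
  set ψ := (fourierTransformCLE ℂ 𝓢(V, ℂ)).symm gC with hψdef
  have hψ : 𝓕 (⇑ψ) = ⇑gC := by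
    have h1 := (fourierTransformCLE ℂ 𝓢(V, ℂ)).apply_symm_apply gC
    calc 𝓕 ⇑ψ = ⇑(fourierTransformCLE ℂ 𝓢(V, ℂ) ψ) := rfl
    _ = ⇑gC := by rw [h1]
  have hflip : (innerₗ V).flip = innerₗ V := by
    apply LinearMap.ext; intro x; apply LinearMap.ext; intro y
    simp only [LinearMap.flip_apply, innerₗ_apply_apply]
    exact real_inner_comm x y
  have hmult := VectorFourier.integral_fourierIntegral_smul_eq_flip (μ := (volume : Measure V))
    (ν := (volume : Measure V)) (L := innerₗ V) (f := ⇑ψ) (g := d)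
    Real.continuous_fourierChar continuous_inner ψ.integrable hd
  rw [hflip] at hmult
  have hrhs : ∫ x, ψ x • (VectorFourier.fourierIntegral Real.fourierChar volume (innerₗ V) d x) = 0 := by
    have : ∀ x, ψ x • (VectorFourier.fourierIntegral Real.fourierChar volume (innerₗ V) d x) = 0 := by
      intro x
      have := h x
      change VectorFourier.fourierIntegral Real.fourierChar volume (innerₗ V) d x = 0 at this
      rw [this, smul_zero]
    exact integral_eq_zero_of_ae (Filter.Eventually.of_forall this)
  have hlhs : ∫ ξ, (VectorFourier.fourierIntegral Real.fourierChar volume (innerₗ V) (⇑ψ) ξ) • d ξ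
      = ∫ ξ, (g ξ : ℂ) * d ξ := by
    apply integral_congr_ae
    filter_upwards with ξ
    have : VectorFourier.fourierIntegral Real.fourierChar volume (innerₗ V) (⇑ψ) ξ = gC ξ := by
      change 𝓕 (⇑ψ) ξ = gC ξ
      rw [hψ]
    rw [this, smul_eq_mul]
    rfl
  have : ∫ ξ, (g ξ : ℂ) * d ξ = 0 := by rw [← hlhs, hmult, hrhs]
  calc ∫ x, g x • d x = ∫ ξ, (g ξ : ℂ) * d ξ := by
        apply integral_congr_ae; filter_upwards with x; exact Complex.real_smul
  _ = 0 := this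

end Aux2

open scoped FourierTransform

/-- Uniqueness for the inverse source problem with phased multi-frequency
far field data: for a separable source `S(y,k) = f(y)g(k)`, the data
`g(k)u∞_f(x̂,k)` over all directions and all `k ∈ (k_min, k_max)` determine
the spatial part `f` uniquely. -/
theorem inverse_source_uniqueness_phased
    (n : ℕ) (hn : n = 2 ∨ n = 3) (kmin kmax : ℝ)
    (hk : 0 < kmin) (hkk : kmin < kmax)
    (f₁ f₂ : EuclideanSpace ℝ (Fin n) → ℂ)
    (hf₁ : Integrable f₁) (hcs₁ : HasCompactSupport f₁)
    (hf₂ : Integrable f₂) (hcs₂ : HasCompactSupport f₂)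
    (g : ℝ → ℂ) (hg : ContinuousOn g (Set.Ioo kmin kmax))
    (hgne : ∃ k ∈ Set.Ioo kmin kmax, g k ≠ 0)
    (hdata : ∀ xhat : EuclideanSpace ℝ (Fin n), ‖xhat‖ = 1 →
      ∀ k ∈ Set.Ioo kmin kmax,
        g k * farField f₁ xhat k = g k * farField f₂ xhat k) :
    f₁ =ᵐ[volume] f₂ := by
  have hnpos : 0 < n := by rcases hn with h | h <;> omega
  set d : EuclideanSpace ℝ (Fin n) → ℂ := fun y => f₁ y - f₂ y with hd_def
  have hd : Integrable d := hf₁.sub hf₂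
  have hcs : HasCompactSupport d := by
    have hfe : d = f₁ + -f₂ := by funext y; simp [hd_def, sub_eq_add_neg]
    rw [hfe]
    exact hcs₁.add hcs₂.neg
  obtain ⟨R, hRsub⟩ := hcs.isCompact.isBounded.subset_closedBall 0
  set R' : ℝ := max R 0 with hR'
  have hR0 : (0:ℝ) ≤ R' := le_max_right _ _
  -- integrability of the far field integrand for real k
  have hint : ∀ (f : EuclideanSpace ℝ (Fin n) → ℂ), Integrable f →
      ∀ (xh : EuclideanSpace ℝ (Fin n)) (k : ℝ),
      Integrable (fun y => Complex.exp (-(Complex.I * (k:ℂ) * ((⟪xh,y⟫ : ℝ):ℂ))) * f y) := by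
    intro f hf xh k
    apply hf.bdd_mul (c := 1)
    · exact (((continuous_const.mul (Complex.continuous_ofReal.comp
        (Continuous.inner continuous_const continuous_id))).neg).cexp).aestronglyMeasurable
    · refine Filter.Eventually.of_forall (fun y => ?_)
      rw [norm_cexp_neg_I_mul ((k:ℝ):ℂ) ⟪xh,y⟫]
      simp
  have hsub : ∀ (xh : EuclideanSpace ℝ (Fin n)) (k : ℝ),
      farField d xh k = farField f₁ xh k - farField f₂ xh k := by
    intro xh k
    unfold farField
    rw [← integral_sub (hint f₁ hf₁ xh k) (hint f₂ hf₂ xh k)]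
    congr 1; funext y; simp only [hd_def]; ring
  -- find a subinterval where g is nonvanishing
  obtain ⟨k₀, hk₀mem, hk₀⟩ := hgne
  have hcont : ContinuousAt g k₀ := hg.continuousAt (isOpen_Ioo.mem_nhds hk₀mem)
  have hev : ∀ᶠ k in nhds k₀, k ∈ Set.Ioo kmin kmax ∧ g k ≠ 0 :=
    (isOpen_Ioo.eventually_mem hk₀mem).and (hcont.eventually_ne hk₀)
  obtain ⟨δ, hδpos, hδ⟩ := Metric.eventually_nhds_iff.1 hev
  -- the far field of d vanishes for all frequencies and all directions
  have hffd : ∀ (xh : EuclideanSpace ℝ (Fin n)), ‖xh‖ = 1 → ∀ k : ℝ, farField d xh k = 0 := by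
    intro xh hxh
    have htcont : Continuous fun y : EuclideanSpace ℝ (Fin n) => (⟪xh, y⟫ : ℝ) :=
      Continuous.inner continuous_const continuous_id
    have hRbd : ∀ y, d y ≠ 0 → |(⟪xh, y⟫ : ℝ)| ≤ R' := by
      intro y hy
      have hyt : y ∈ tsupport d := subset_tsupport d hy
      have hyR : ‖y‖ ≤ R := by
        have := hRsub hyt
        simpa [dist_zero_right] using this
      calc |(⟪xh, y⟫ : ℝ)| ≤ ‖xh‖ * ‖y‖ := abs_real_inner_le_norm _ _
      _ = ‖y‖ := by rw [hxh, one_mul]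
      _ ≤ R' := le_trans hyR (le_max_left _ _)
    have hdiff := entire_aux d hd (fun y => (⟪xh, y⟫ : ℝ)) htcont R' hR0 hRbd
    have h0 : ∀ x : ℝ, x ∈ Set.Ioo (k₀ - δ) (k₀ + δ) →
        (fun z : ℂ => ∫ y, Complex.exp (-(Complex.I * z * ((⟪xh, y⟫ : ℝ):ℂ))) * d y) (x:ℂ) = 0 := by
      intro x hx
      have hdist : dist x k₀ < δ := by
        rw [Real.dist_eq, abs_sub_lt_iff]
        constructor <;> [linarith [hx.2]; linarith [hx.1]]
      obtain ⟨hxmem, hgx⟩ := hδ hdist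
      have hcancel : farField f₁ xh x = farField f₂ xh x :=
        mul_left_cancel₀ hgx (hdata xh hxh x hxmem)
      have : farField d xh x = 0 := by rw [hsub, hcancel, sub_self]
      exact this
    have hzero := entire_zero_of_zero_on_Ioo hdiff (by linarith) h0
    intro k
    exact hzero (k : ℂ)
  -- hence the Fourier transform of d vanishes identically
  have hi0 : Fin n := ⟨0, hnpos⟩
  have he₀ : ‖(EuclideanSpace.single hi0 (1:ℝ))‖ = 1 := by
    simp [EuclideanSpace.norm_single]
  have hfour : ∀ w : EuclideanSpace ℝ (Fin n), 𝓕 d w = 0 := by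
    intro w
    by_cases hw : w = (0 : EuclideanSpace ℝ (Fin n))
    · subst hw
      have h1 : 𝓕 d (0 : EuclideanSpace ℝ (Fin n)) = ∫ y, d y := by
        rw [Real.fourier_eq']
        simp
      have h2 : farField d (EuclideanSpace.single hi0 (1:ℝ)) 0 = ∫ y, d y := by
        unfold farField
        congr 1; funext y; simp
      rw [h1, ← h2]
      exact hffd _ he₀ 0
    · set k : ℝ := 2 * Real.pi * ‖w‖ with hk_def
      set xh : EuclideanSpace ℝ (Fin n) := ‖w‖⁻¹ • w with hxh_def
      have hwn : ‖w‖ ≠ 0 := norm_ne_zero_iff.2 hw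
      have hxh : ‖xh‖ = 1 := norm_smul_inv_norm hw
      have heq : 𝓕 d w = farField d xh k := by
        rw [Real.fourier_eq']
        unfold farField
        congr 1; funext y
        rw [smul_eq_mul]
        congr 1
        have hre : k * (⟪xh, y⟫ : ℝ) = 2 * Real.pi * (⟪y, w⟫ : ℝ) := by
          rw [hxh_def, real_inner_smul_left, real_inner_comm, hk_def]
          field_simp
        have : ((-2 * Real.pi * (⟪y, w⟫ : ℝ) : ℝ) : ℂ) = -(k * (⟪xh, y⟫ : ℝ) : ℝ) := by
          rw [hre]; push_cast; ring
        rw [this]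
        push_cast
        ring
      rw [heq]
      exact hffd xh hxh k
  have hzero := ae_zero_of_fourier_zero d hd hfour
  filter_upwards [hzero] with y hy
  have : f₁ y - f₂ y = 0 := hy
  exact sub_eq_zero.1 this
end

section
/- Let n ≥ 1 and let f : ℝ^n → ℂ be integrable with compact support. If the Fourier-type transform f̂(ξ) := ∫_{ℝ^n} e^{−i⟨ξ,y⟩} f(y) dy vanishes for all ξ in some nonempty open subset U ⊆ ℝ^n, then f = 0 almost everywhere. -/
open MeasureTheory
open scoped RealInnerProductSpace

open scoped FourierTransform Real

noncomputable section
namespace FourierVanishAux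

def monomialSet (n : ℕ) : Set (EuclideanSpace ℝ (Fin n) → ℝ) :=
  {q | ∃ (k : ℕ) (m : Fin k → EuclideanSpace ℝ (Fin n)), q = fun v => ∏ j, ⟪v, m j⟫}

variable {n : ℕ}

local notation "V" => EuclideanSpace ℝ (Fin n)

lemma integrable_pow_mul {f : V → ℂ} (hf : Integrable f) (hcs : HasCompactSupport f) (k : ℕ) :
    Integrable (fun v : V => ‖v‖ ^ k * ‖f v‖) := by
  obtain ⟨R, hR⟩ := hcs.isCompact.isBounded.subset_closedBall 0
  set C := max R 0 with hC
  refine ((hf.norm.const_mul (C ^ k)).mono'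
    ((continuous_norm.pow k).aestronglyMeasurable.mul hf.norm.aestronglyMeasurable) ?_)
  filter_upwards with v
  rw [Real.norm_of_nonneg (by positivity)]
  by_cases hv : v ∈ tsupport f
  · have h1 : ‖v‖ ≤ C := by
      have := hR hv
      simp only [Metric.mem_closedBall, dist_zero_right] at this
      exact this.trans (le_max_left _ _)
    exact mul_le_mul_of_nonneg_right (pow_le_pow_left₀ (norm_nonneg v) h1 k) (norm_nonneg _)
  · simp [image_eq_zero_of_notMem_tsupport hv]

lemma integrable_cont_mul {g : V → ℂ} (hg : Integrable g) (hcs : HasCompactSupport g)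
    {q : V → ℝ} (hq : Continuous q) :
    Integrable fun v => (q v : ℂ) * g v := by
  obtain ⟨C, hC⟩ := hcs.isCompact.exists_bound_of_continuousOn hq.continuousOn
  refine (hg.norm.const_mul C).mono'
    ((Complex.continuous_ofReal.comp hq).aestronglyMeasurable.mul hg.aestronglyMeasurable) ?_
  filter_upwards with v
  by_cases hv : v ∈ tsupport g
  · rw [norm_mul, Complex.norm_real]
    exact mul_le_mul_of_nonneg_right (hC v hv) (norm_nonneg _)
  · simp [image_eq_zero_of_notMem_tsupport hv]

lemma monomial_continuous {k : ℕ} (m : Fin k → V) :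
    Continuous fun v : V => ∏ j, ⟪v, m j⟫ :=
  continuous_finset_prod _ fun j _ => continuous_id.inner continuous_const

lemma monomial_mul_mem {k1 k2 : ℕ} (m1 : Fin k1 → V) (m2 : Fin k2 → V) :
    ((fun v : V => ∏ j, ⟪v, m1 j⟫) * fun v => ∏ j, ⟪v, m2 j⟫) ∈ monomialSet n := by
  refine ⟨k1 + k2, Fin.append m1 m2, ?_⟩
  funext v
  simp [Fin.prod_univ_add, Fin.append_left, Fin.append_right]

lemma span_mul {q1 q2 : V → ℝ} (h1 : q1 ∈ Submodule.span ℝ (monomialSet n))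
    (h2 : q2 ∈ Submodule.span ℝ (monomialSet n)) :
    q1 * q2 ∈ Submodule.span ℝ (monomialSet n) := by
  induction h1 using Submodule.span_induction with
  | mem x hx =>
    induction h2 using Submodule.span_induction with
    | mem y hy =>
      obtain ⟨k1, m1, rfl⟩ := hx
      obtain ⟨k2, m2, rfl⟩ := hy
      exact Submodule.subset_span (monomial_mul_mem m1 m2)
    | zero => rw [mul_zero]; exact Submodule.zero_mem _
    | add y z _ _ ihy ihz => rw [mul_add]; exact Submodule.add_mem _ ihy ihz
    | smul a y _ ih => rw [mul_smul_comm]; exact Submodule.smul_mem _ a ih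
  | zero => rw [zero_mul]; exact Submodule.zero_mem _
  | add x y _ _ ihx ihy => rw [add_mul]; exact Submodule.add_mem _ ihx ihy
  | smul a x _ ih => rw [smul_mul_assoc]; exact Submodule.smul_mem _ a ih

lemma span_integral_zero {g : V → ℂ} (hg : Integrable g) (hcs : HasCompactSupport g)
    (hmom : ∀ (k : ℕ) (m : Fin k → V), ∫ v, ((∏ j, ⟪v, m j⟫ : ℝ) : ℂ) * g v = 0)
    {q : V → ℝ} (hq : q ∈ Submodule.span ℝ (monomialSet n)) :
    Continuous q ∧ ∫ v, (q v : ℂ) * g v = 0 := by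
  induction hq using Submodule.span_induction with
  | mem x hx =>
    obtain ⟨k, m, rfl⟩ := hx
    exact ⟨monomial_continuous m, hmom k m⟩
  | zero => exact ⟨continuous_const, by simp⟩
  | add x y hx hy ihx ihy =>
    refine ⟨ihx.1.add ihy.1, ?_⟩
    have Ix := integrable_cont_mul hg hcs ihx.1
    have Iy := integrable_cont_mul hg hcs ihy.1
    simp only [Pi.add_apply, Complex.ofReal_add, add_mul]
    rw [integral_add Ix Iy, ihx.2, ihy.2, add_zero]
  | smul a x hx ih =>
    refine ⟨ih.1.const_smul a, ?_⟩
    simp only [Pi.smul_apply, smul_eq_mul, Complex.ofReal_mul, mul_assoc]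
    rw [integral_const_mul, ih.2, mul_zero]

theorem moments_to_zero {g : V → ℂ} (hg : Integrable g) (hcs : HasCompactSupport g)
    (hmom : ∀ (k : ℕ) (m : Fin k → V), ∫ v, ((∏ j, ⟪v, m j⟫ : ℝ) : ℂ) * g v = 0) :
    g =ᵐ[volume] 0 := by
  have key : ∀ (φ : V → ℝ), Continuous φ → ∫ v, (φ v : ℂ) * g v = 0 := by
    intro φ hφ
    set K := tsupport g with hK
    haveI : CompactSpace K := isCompact_iff_compactSpace.mp hcs
    set S : Set C(K, ℝ) := Set.range (fun w : V => ContinuousMap.mk (fun x : K => ⟪(x : V), w⟫)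
      (continuous_subtype_val.inner continuous_const)) with hS
    set A : Subalgebra ℝ C(K, ℝ) := Algebra.adjoin ℝ S with hA
    have hsep : A.SeparatesPoints := by
      intro x y hxy
      refine ⟨fun z : K => ⟪(z : V), (x : V) - (y : V)⟫,
        ⟨ContinuousMap.mk _ (continuous_subtype_val.inner continuous_const),
          Algebra.subset_adjoin ⟨(x : V) - (y : V), rfl⟩, rfl⟩, ?_⟩
      intro h
      apply hxy
      have h2 : ⟪(x : V) - (y : V), (x : V) - (y : V)⟫ = 0 := by
        rw [inner_sub_left, sub_eq_zero]
        exact h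
      have := inner_self_eq_zero.mp h2
      exact Subtype.ext (sub_eq_zero.mp this)
    have hrestrict : ∀ p ∈ A, ∃ q ∈ Submodule.span ℝ (monomialSet n), ∀ x : K, q x = p x := by
      intro p hp
      induction hp using Algebra.adjoin_induction with
      | mem x hx =>
        obtain ⟨w, rfl⟩ := hx
        refine ⟨fun v => ∏ j : Fin 1, ⟪v, (fun _ => w) j⟫,
          Submodule.subset_span ⟨1, fun _ => w, rfl⟩, ?_⟩
        intro x; simp
      | algebraMap r =>
        refine ⟨r • fun v => ∏ j : Fin 0, ⟪v, (finZeroElim (α := fun _ => V)) j⟫,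
          Submodule.smul_mem _ r (Submodule.subset_span ⟨0, finZeroElim, rfl⟩), ?_⟩
        intro x; simp
      | add p1 p2 h1 h2 ih1 ih2 =>
        obtain ⟨q1, hq1, he1⟩ := ih1
        obtain ⟨q2, hq2, he2⟩ := ih2
        exact ⟨q1 + q2, Submodule.add_mem _ hq1 hq2, fun x => by
          simp [he1 x, he2 x]⟩
      | mul p1 p2 h1 h2 ih1 ih2 =>
        obtain ⟨q1, hq1, he1⟩ := ih1
        obtain ⟨q2, hq2, he2⟩ := ih2
        exact ⟨q1 * q2, span_mul hq1 hq2, fun x => by simp [he1 x, he2 x]⟩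
    have hCnn : (0 : ℝ) ≤ ∫ v, ‖g v‖ := integral_nonneg fun _ => norm_nonneg _
    have main : ∀ ε : ℝ, 0 < ε → ‖∫ v, (φ v : ℂ) * g v‖ ≤ ε * ∫ v, ‖g v‖ := by
      intro ε hε
      obtain ⟨⟨p, hpA⟩, happrox⟩ :=
        ContinuousMap.exists_mem_subalgebra_near_continuous_of_separatesPoints A hsep
          (fun x : K => φ x) (hφ.comp continuous_subtype_val) ε hε
      obtain ⟨q, hqmem, hmatch⟩ := hrestrict p hpA
      obtain ⟨hqc, hqi⟩ := span_integral_zero hg hcs hmom hqmem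
      have Iφ : Integrable (fun v => (φ v : ℂ) * g v) := integrable_cont_mul hg hcs hφ
      have Iq : Integrable (fun v => (q v : ℂ) * g v) := integrable_cont_mul hg hcs hqc
      have heq : ∫ v, (φ v : ℂ) * g v = ∫ v, ((φ v - q v : ℝ) : ℂ) * g v := by
        push_cast
        simp only [sub_mul]
        rw [integral_sub Iφ Iq, hqi, sub_zero]
      rw [heq]
      calc ‖∫ v, ((φ v - q v : ℝ) : ℂ) * g v‖
          ≤ ∫ v, ‖((φ v - q v : ℝ) : ℂ) * g v‖ := norm_integral_le_integral_norm _
        _ ≤ ∫ v, ε * ‖g v‖ := by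
            apply integral_mono_of_nonneg (Filter.Eventually.of_forall fun v => norm_nonneg _)
              (hg.norm.const_mul ε)
            filter_upwards with v
            by_cases hv : v ∈ K
            · rw [norm_mul, Complex.norm_real]
              refine mul_le_mul_of_nonneg_right ?_ (norm_nonneg _)
              have h2 : q v = p ⟨v, hv⟩ := hmatch ⟨v, hv⟩
              rw [h2]
              calc ‖φ v - p ⟨v, hv⟩‖ = ‖p ⟨v, hv⟩ - φ v‖ := norm_sub_rev _ _
                _ ≤ ε := (happrox ⟨v, hv⟩).le
            · simp [image_eq_zero_of_notMem_tsupport hv]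
        _ = ε * ∫ v, ‖g v‖ := integral_const_mul _ _
    have hnorm : ‖∫ v, (φ v : ℂ) * g v‖ = 0 := by
      refine le_antisymm ?_ (norm_nonneg _)
      refine le_of_forall_pos_le_add fun δ hδ => ?_
      rw [zero_add]
      set C := ∫ v, ‖g v‖ with hCdef
      have h1 := main (δ / (C + 1)) (by positivity)
      refine h1.trans ?_
      have h2 : C / (C + 1) ≤ 1 := (div_le_one (by positivity)).mpr (by linarith)
      calc δ / (C + 1) * C = δ * (C / (C + 1)) := by ring
        _ ≤ δ * 1 := mul_le_mul_of_nonneg_left h2 hδ.le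
        _ = δ := mul_one _
    exact norm_eq_zero.mp hnorm
  have := ae_eq_zero_of_integral_contDiff_smul_eq_zero hg.locallyIntegrable ?_
  · filter_upwards [this] with v hv
    simpa using hv
  · intro w hw hwsupp
    have := key w hw.continuous
    simpa [Complex.real_smul] using this

lemma moments_vanish {f : V → ℂ} (hf : Integrable f) (hcs : HasCompactSupport f)
    {ξ₀ : V} (h0 : 𝓕 f =ᶠ[nhds ξ₀] 0) (k : ℕ) (m : Fin k → V) :
    ∫ v, ((∏ j, ⟪v, m j⟫ : ℝ) : ℂ) * (𝐞 (-⟪v, ξ₀⟫) • f v) = 0 := by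
  have hpow : ∀ (i : ℕ), (i : ℕ∞) ≤ (k : ℕ∞) → Integrable (fun v : V => ‖v‖ ^ i * ‖f v‖) :=
    fun i _ => integrable_pow_mul hf hcs i
  have hd : iteratedFDeriv ℝ k (𝓕 f) ξ₀ = 0 := by
    have h1 : (𝓕 f : V → ℂ) =ᶠ[nhdsWithin ξ₀ Set.univ] 0 := by rwa [nhdsWithin_univ]
    have h2 := Filter.EventuallyEq.iteratedFDerivWithin_eq (𝕜 := ℝ) h1 h0.self_of_nhds k
    rw [← iteratedFDerivWithin_univ, h2, iteratedFDerivWithin_univ]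
    exact congrFun iteratedFDeriv_zero_fun ξ₀
  have hder := Real.iteratedFDeriv_fourier (f := f) (N := (k : ℕ∞)) hpow
    hf.aestronglyMeasurable (le_refl (k : ℕ∞))
  have happ : iteratedFDeriv ℝ k (𝓕 f) ξ₀ m
      = ∫ v, 𝐞 (-⟪v, ξ₀⟫) • (VectorFourier.fourierPowSMulRight (innerSL ℝ) f v k m) := by
    rw [hder, Real.fourier_continuousMultilinearMap_apply
      (VectorFourier.integrable_fourierPowSMulRight _ (integrable_pow_mul hf hcs k)
        hf.aestronglyMeasurable), Real.fourier_eq]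
  have hzero : ∫ v, 𝐞 (-⟪v, ξ₀⟫) • (VectorFourier.fourierPowSMulRight (innerSL ℝ) f v k m)
      = 0 := by
    rw [← happ, hd]; simp
  have hexp : ∫ v, 𝐞 (-⟪v, ξ₀⟫) • (VectorFourier.fourierPowSMulRight (innerSL ℝ) f v k m)
      = (-(2 * π * Complex.I)) ^ k * ∫ v, ((∏ j, ⟪v, m j⟫ : ℝ) : ℂ) * (𝐞 (-⟪v, ξ₀⟫) • f v) := by
    rw [← integral_const_mul]
    congr 1; funext v
    simp only [VectorFourier.fourierPowSMulRight_apply, Circle.smul_def, Complex.real_smul,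
      smul_eq_mul, Complex.ofReal_prod,
      (show ∀ i, ((innerSL ℝ) v) (m i) = ⟪v, m i⟫ from fun _ => rfl)]
    ring
  rw [hexp] at hzero
  have hne : (-(2 * π * Complex.I)) ^ k ≠ 0 := by
    apply pow_ne_zero
    simp [Real.pi_ne_zero, Complex.I_ne_zero]
  exact (mul_eq_zero.mp hzero).resolve_left hne

end FourierVanishAux
end

open FourierVanishAux in
/-- If the Fourier-type transform `f̂(ξ) = ∫ e^{-i⟨ξ,y⟩} f(y) dy` of a
compactly supported integrable function vanishes on a nonempty open set,
then `f = 0` almost everywhere. -/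
theorem fourier_vanishing_on_open_set
    (n : ℕ) (hn : 1 ≤ n) (f : EuclideanSpace ℝ (Fin n) → ℂ)
    (hf : Integrable f) (hcs : HasCompactSupport f)
    (U : Set (EuclideanSpace ℝ (Fin n))) (hU : IsOpen U) (hUne : U.Nonempty)
    (hvanish : ∀ ξ ∈ U,
      (∫ y, Complex.exp (-(Complex.I * ((⟪ξ, y⟫ : ℝ) : ℂ))) * f y) = 0) :
    f =ᵐ[volume] 0 := by
  obtain ⟨ξ₀, hξ₀⟩ := hUne
  set w₀ : EuclideanSpace ℝ (Fin n) := (2 * π)⁻¹ • ξ₀ with hw₀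
  have h2π : (2 * π : ℝ) ≠ 0 := by positivity
  have hmem : (2 * π : ℝ) • w₀ = ξ₀ := by
    rw [hw₀, smul_smul, mul_inv_cancel₀ h2π, one_smul]
  have hev : ∀ᶠ w in nhds w₀, (2 * π : ℝ) • w ∈ U := by
    have hc : Continuous fun w : EuclideanSpace ℝ (Fin n) => (2 * π : ℝ) • w :=
      continuous_const_smul _
    exact hc.continuousAt.preimage_mem_nhds (hU.mem_nhds (hmem ▸ hξ₀))
  have h0 : (𝓕 f) =ᶠ[nhds w₀] 0 := by
    filter_upwards [hev] with w hw
    have hv := hvanish _ hw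
    show 𝓕 f w = 0
    rw [Real.fourier_eq']
    rw [← hv]
    congr 1
    funext y
    rw [smul_eq_mul]
    congr 1
    rw [real_inner_smul_left, real_inner_comm y w]
    push_cast
    ring
  set g : EuclideanSpace ℝ (Fin n) → ℂ := fun v => 𝐞 (-⟪v, w₀⟫) • f v with hgdef
  have hgi : Integrable g := (Real.fourierIntegral_convergent_iff w₀).mpr hf
  have hgcs : HasCompactSupport g := by
    apply hcs.mono
    intro v hv
    simp only [hgdef, Function.mem_support, ne_eq] at hv ⊢
    intro hfv
    exact hv (by rw [hfv, smul_zero])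
  have hmom := fun k m => moments_vanish hf hcs h0 k m
  have hgz := moments_to_zero hgi hgcs hmom
  filter_upwards [hgz] with v hv
  simp only [hgdef, Pi.zero_apply, Circle.smul_def] at hv ⊢
  rcases mul_eq_zero.mp hv with h | h
  · exact absurd h (Circle.coe_ne_zero _)
  · exact h
end

section
/- Let n ∈ {2, 3}, let 0 < k_min < k_max, let f1, f2 : ℝ^n → ℂ be integrable with compact support, let g : ℝ → ℂ be continuous on (k_min, k_max) with g(k) ≠ 0 for all k in some nonempty open subinterval (k_a, k_b) ⊆ (k_min, k_max), let τ1 ∈ ℂ \ {0}, and let z0, z1 ∈ ℝ^n with z0 ≠ z1. If | g(k) u∞_{f1}(x̂, k) + τ e^{−ik⟨x̂, p⟩} | = | g(k) u∞_{f2}(x̂, k) + τ e^{−ik⟨x̂, p⟩} | for all unit vectors x̂ ∈ ℝ^n, all k ∈ (k_min, k_max), all τ ∈ {0, τ1}, and both p ∈ {z0, z1}, then f1 = f2 almost everywhere. (Uniqueness for the phaseless inverse source problem with two reference point sources.) -/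
open MeasureTheory
open scoped RealInnerProductSpace

open Filter Complex SchwartzMap
open scoped FourierTransform ContDiff Topology

section Helpers

lemma osc_re (z : ℂ) (s : ℝ) : (-(Complex.I * z * (s:ℂ))).re = s * z.im := by
  simp [Complex.mul_re, Complex.mul_im]; ring

lemma norm_osc (k s : ℝ) : ‖Complex.exp (-(Complex.I * (k:ℂ) * (s:ℂ)))‖ = 1 := by
  rw [Complex.norm_exp, osc_re]
  simp

lemma conj_osc (k s : ℝ) :
    (starRingEnd ℂ) (Complex.exp (-(Complex.I * (k:ℂ) * (s:ℂ))))
      = Complex.exp (Complex.I * (k:ℂ) * (s:ℂ)) := by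
  rw [← Complex.exp_conj]
  congr 1
  simp [map_mul, Complex.conj_I, Complex.conj_ofReal]

lemma abs_alg {a b c : ℂ} (h1 : ‖a‖ = ‖b‖)
    (h2 : ‖a + c‖ = ‖b + c‖) :
    ((a - b) * (starRingEnd ℂ) c).re = 0 := by
  have e1 : Complex.normSq a = Complex.normSq b := by
    rw [← Complex.sq_norm, ← Complex.sq_norm, h1]
  have e2 : Complex.normSq (a + c) = Complex.normSq (b + c) := by
    rw [← Complex.sq_norm, ← Complex.sq_norm, h2]
  rw [Complex.normSq_add, Complex.normSq_add] at e2
  have : (a * (starRingEnd ℂ) c).re = (b * (starRingEnd ℂ) c).re := by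
    rw [e1] at e2; linarith
  rw [sub_mul, Complex.sub_re, this, sub_self]

lemma stepA {k θ : ℝ} {u : ℂ} (hsin : Real.sin (k*θ) ≠ 0)
    (r0 : u.re = 0)
    (r1 : (u * Complex.exp (Complex.I * (k:ℂ) * (θ:ℂ))).re = 0) : u = 0 := by
  have he : Complex.exp (Complex.I * (k:ℂ) * (θ:ℂ)) = Complex.exp (((k*θ:ℝ):ℂ) * Complex.I) := by
    congr 1; push_cast; ring
  rw [he, Complex.exp_mul_I] at r1
  have hre : (u * (Complex.cos ((k*θ:ℝ):ℂ) + Complex.sin ((k*θ:ℝ):ℂ) * Complex.I)).re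
      = u.re * Real.cos (k*θ) - u.im * Real.sin (k*θ) := by
    rw [← Complex.ofReal_cos, ← Complex.ofReal_sin]
    simp only [Complex.mul_re, Complex.mul_im, Complex.add_re, Complex.add_im,
      Complex.ofReal_re, Complex.ofReal_im, Complex.I_re, Complex.I_im]
    ring
  rw [hre, r0] at r1
  have him : u.im = 0 := by
    have : u.im * Real.sin (k*θ) = 0 := by linarith
    rcases mul_eq_zero.1 this with h | h
    · exact h
    · exact absurd h hsin
  exact Complex.ext r0 him

lemma osc_integrable {n : ℕ} (f : EuclideanSpace ℝ (Fin n) → ℂ) (hf : Integrable f)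
    (x : EuclideanSpace ℝ (Fin n)) (k : ℝ) :
    Integrable (fun y => Complex.exp (-(Complex.I * (k:ℂ) * ((⟪x, y⟫ : ℝ) : ℂ))) * f y) := by
  apply hf.bdd_mul
  · exact (Complex.continuous_exp.comp ((continuous_const.mul
      (Complex.continuous_ofReal.comp (continuous_const.inner continuous_id))).neg)).aestronglyMeasurable
  · exact Filter.Eventually.of_forall (fun y => le_of_eq (norm_osc k _))

lemma farField_sub {n : ℕ} (f₁ f₂ : EuclideanSpace ℝ (Fin n) → ℂ)
    (hf₁ : Integrable f₁) (hf₂ : Integrable f₂)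
    (x : EuclideanSpace ℝ (Fin n)) (k : ℝ) :
    farField (fun y => f₁ y - f₂ y) x k = farField f₁ x k - farField f₂ x k := by
  unfold farField
  rw [← integral_sub (osc_integrable f₁ hf₁ x k) (osc_integrable f₂ hf₂ x k)]
  congr 1
  funext y
  ring

lemma exists_entire {n : ℕ} (R : ℝ) (F : EuclideanSpace ℝ (Fin n) → ℂ)
    (hF : Integrable F) (hsupp : ∀ y, y ∉ Metric.closedBall (0 : EuclideanSpace ℝ (Fin n)) R → F y = 0)
    (x : EuclideanSpace ℝ (Fin n)) :
    ∃ φ : ℂ → ℂ, Differentiable ℂ φ ∧ ∀ k : ℝ, φ k = farField F x k := by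
  set C : ℝ := ‖x‖ * max R 0 with hC
  have hC0 : 0 ≤ C := mul_nonneg (norm_nonneg _) (le_max_right _ _)
  have hs_bound : ∀ y, F y ≠ 0 → |⟪x, y⟫| ≤ C := by
    intro y hy
    have hy' : y ∈ Metric.closedBall (0 : EuclideanSpace ℝ (Fin n)) R := by
      by_contra h; exact hy (hsupp y h)
    have hnorm : ‖y‖ ≤ max R 0 :=
      le_trans (mem_closedBall_zero_iff.1 hy') (le_max_left _ _)
    calc |⟪x, y⟫| ≤ ‖x‖ * ‖y‖ := abs_real_inner_le_norm x y
    _ ≤ ‖x‖ * max R 0 := by gcongr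
  refine ⟨fun z => ∫ y, Complex.exp (-(Complex.I * z * ((⟪x, y⟫ : ℝ) : ℂ))) * F y, ?_, fun k => rfl⟩
  intro z₀
  have meas_exp : ∀ z : ℂ, Continuous fun y : EuclideanSpace ℝ (Fin n) =>
      Complex.exp (-(Complex.I * z * ((⟪x, y⟫ : ℝ) : ℂ))) := by
    intro z
    exact Complex.continuous_exp.comp
      (((continuous_const.mul ((Complex.continuous_ofReal.comp
        (continuous_const.inner continuous_id)))).neg))
  have meas_exp' : ∀ z : ℂ, Continuous fun y : EuclideanSpace ℝ (Fin n) =>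
      Complex.exp (-(Complex.I * z * ((⟪x, y⟫ : ℝ) : ℂ))) * (-(Complex.I * ((⟪x, y⟫ : ℝ) : ℂ))) := by
    intro z
    exact (meas_exp z).mul ((continuous_const.mul
      (Complex.continuous_ofReal.comp (continuous_const.inner continuous_id))).neg)
  refine HasDerivAt.differentiableAt (hasDerivAt_integral_of_dominated_loc_of_deriv_le
    (F := fun (z : ℂ) (y : EuclideanSpace ℝ (Fin n)) =>
      Complex.exp (-(Complex.I * z * ((⟪x, y⟫ : ℝ) : ℂ))) * F y)
    (F' := fun (z : ℂ) (y : EuclideanSpace ℝ (Fin n)) =>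
      Complex.exp (-(Complex.I * z * ((⟪x, y⟫ : ℝ) : ℂ))) * (-(Complex.I * ((⟪x, y⟫ : ℝ) : ℂ))) * F y)
    (x₀ := z₀) (bound := fun y => C * Real.exp (C * (|z₀.im| + 1)) * ‖F y‖)
    (s := Metric.ball z₀ 1) (Metric.ball_mem_nhds z₀ one_pos)
    ?_ ?_ ?_ ?_ ?_ ?_).2
  · filter_upwards with z
    exact ((meas_exp z).aestronglyMeasurable.mul hF.1)
  · -- Integrable (F z₀)
    apply (hF.norm.const_mul (Real.exp (C * (|z₀.im| + 1)))).mono'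
      ((meas_exp z₀).aestronglyMeasurable.mul hF.1)
    filter_upwards with y
    simp only [Pi.mul_apply]
    rcases eq_or_ne (F y) 0 with h | h
    · simp [h]
      all_goals positivity
    · have hb := hs_bound y h
      rw [norm_mul, Complex.norm_exp, osc_re]
      have him : ⟪x, y⟫ * z₀.im ≤ C * (|z₀.im| + 1) := by
        calc ⟪x, y⟫ * z₀.im ≤ |⟪x, y⟫ * z₀.im| := le_abs_self _
        _ = |⟪x, y⟫| * |z₀.im| := abs_mul _ _
        _ ≤ C * (|z₀.im| + 1) := by
            apply mul_le_mul hb (by linarith) (abs_nonneg _) hC0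
      exact mul_le_mul_of_nonneg_right (Real.exp_le_exp.2 him) (norm_nonneg _)
  · exact ((meas_exp' z₀).aestronglyMeasurable.mul hF.1)
  · -- bound
    filter_upwards with y
    intro z hz
    rcases eq_or_ne (F y) 0 with h | h
    · simp [h]
      all_goals positivity
    · have hb := hs_bound y h
      have him : |z.im| ≤ |z₀.im| + 1 := by
        have h1 : |z.im - z₀.im| ≤ ‖z - z₀‖ := by
          simpa using Complex.abs_im_le_norm (z - z₀)
        have h2 : ‖z - z₀‖ < 1 := by
          simpa [Complex.dist_eq] using Metric.mem_ball.1 hz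
        have := abs_sub_abs_le_abs_sub z.im z₀.im
        linarith
      rw [norm_mul, norm_mul, Complex.norm_exp, osc_re]
      have hexp : Real.exp (⟪x, y⟫ * z.im) ≤ Real.exp (C * (|z₀.im| + 1)) := by
        apply Real.exp_le_exp.2
        calc ⟪x, y⟫ * z.im ≤ |⟪x, y⟫ * z.im| := le_abs_self _
        _ = |⟪x, y⟫| * |z.im| := abs_mul _ _
        _ ≤ C * (|z₀.im| + 1) := mul_le_mul hb him (abs_nonneg _) hC0
      have hfac : ‖-(Complex.I * ((⟪x, y⟫ : ℝ) : ℂ))‖ ≤ C := by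
        rw [norm_neg, norm_mul, Complex.norm_I, one_mul, Complex.norm_real, Real.norm_eq_abs]
        exact hb
      calc Real.exp (⟪x, y⟫ * z.im) * ‖-(Complex.I * ((⟪x, y⟫ : ℝ) : ℂ))‖ * ‖F y‖
          ≤ Real.exp (C * (|z₀.im| + 1)) * C * ‖F y‖ := by
            apply mul_le_mul_of_nonneg_right _ (norm_nonneg _)
            exact mul_le_mul hexp hfac (norm_nonneg _) (Real.exp_pos _).le
      _ = C * Real.exp (C * (|z₀.im| + 1)) * ‖F y‖ := by ring
  · exact (hF.norm.const_mul _)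
  · -- HasDerivAt
    filter_upwards with y
    intro z hz
    set s : ℝ := ⟪x, y⟫
    have heq : (fun w : ℂ => Complex.exp (-(Complex.I * w * (s : ℂ))) * F y)
        = fun w : ℂ => Complex.exp ((-(Complex.I * (s : ℂ))) * w) * F y := by
      ext w; congr 2; ring
    rw [heq]
    have h0 : HasDerivAt (fun w : ℂ => (-(Complex.I * (s : ℂ))) * w) (-(Complex.I * (s : ℂ))) z := by
      simpa using (hasDerivAt_id z).const_mul (-(Complex.I * (s : ℂ)))
    have h1 := (h0.cexp).mul_const (F y)
    have h2 : Complex.exp ((-(Complex.I * (s:ℂ))) * z) = Complex.exp (-(Complex.I * z * (s:ℂ))) := by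
      congr 1; ring
    rw [h2] at h1
    exact h1

set_option maxHeartbeats 1000000 in
lemma fourier_injective {n : ℕ} (F : EuclideanSpace ℝ (Fin n) → ℂ) (hF : Integrable F)
    (h : ∀ ξ, 𝓕 F ξ = 0) : F =ᵐ[volume] 0 := by
  apply ae_eq_zero_of_integral_contDiff_smul_eq_zero hF.locallyIntegrable
  intro g hg hgsupp
  have hsmooth : ContDiff ℝ ∞ fun x : EuclideanSpace ℝ (Fin n) => (g x : ℂ) :=
    Complex.ofRealCLM.contDiff.comp hg
  have hsupp2 : HasCompactSupport fun x : EuclideanSpace ℝ (Fin n) => (g x : ℂ) := by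
    have h2 := hgsupp.comp_left (g := Complex.ofReal) Complex.ofReal_zero
    exact h2
  let G : SchwartzMap (EuclideanSpace ℝ (Fin n)) ℂ :=
    { toFun := fun x => (g x : ℂ)
      smooth' := hsmooth
      decay' := by
        intro k m
        have hD : HasCompactSupport (iteratedFDeriv ℝ m fun x : EuclideanSpace ℝ (Fin n) => (g x : ℂ)) :=
          hsupp2.iteratedFDeriv m
        have hcont : Continuous fun x : EuclideanSpace ℝ (Fin n) =>
            ‖x‖ ^ k * ‖iteratedFDeriv ℝ m (fun x => (g x : ℂ)) x‖ :=
          (continuous_norm.pow k).mul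
            (ContDiff.continuous_iteratedFDeriv (by exact_mod_cast le_top) hsmooth).norm
        have hcs : HasCompactSupport fun x : EuclideanSpace ℝ (Fin n) =>
            ‖x‖ ^ k * ‖iteratedFDeriv ℝ m (fun x => (g x : ℂ)) x‖ :=
          hD.norm.mul_left
        obtain ⟨C, hC⟩ := hcont.bounded_above_of_compact_support hcs
        refine ⟨C, fun x => ?_⟩
        have := hC x
        exact le_trans (le_abs_self _) (by rwa [Real.norm_eq_abs] at this) }
  let ψ := (fourierTransformCLE ℂ 𝓢(EuclideanSpace ℝ (Fin n), ℂ)).symm G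
  have hψ : 𝓕 (⇑ψ) = ⇑G := by
    have h1 : fourierTransformCLE ℂ 𝓢(EuclideanSpace ℝ (Fin n), ℂ) ψ = G := (fourierTransformCLE ℂ 𝓢(EuclideanSpace ℝ (Fin n), ℂ)).apply_symm_apply G
    rw [← h1]
    rfl
  have flip_eq : (innerₗ (EuclideanSpace ℝ (Fin n))).flip = innerₗ _ := by
    apply LinearMap.ext; intro v; apply LinearMap.ext; intro w
    simpa using real_inner_comm w v
  have mult := VectorFourier.integral_fourierIntegral_smul_eq_flip
    (L := innerₗ (EuclideanSpace ℝ (Fin n))) (μ := volume) (ν := volume)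
    Real.continuous_fourierChar continuous_inner hF ψ.integrable
  rw [flip_eq] at mult
  have hL : (∫ ξ, (VectorFourier.fourierIntegral Real.fourierChar volume
      (innerₗ (EuclideanSpace ℝ (Fin n))) F ξ) • ψ ξ) = 0 := by
    have : ∀ ξ, (VectorFourier.fourierIntegral Real.fourierChar volume
        (innerₗ (EuclideanSpace ℝ (Fin n))) F ξ) = 0 := h
    simp [this]
  rw [hL] at mult
  have hR : (∫ x, F x • (VectorFourier.fourierIntegral Real.fourierChar volume
      (innerₗ (EuclideanSpace ℝ (Fin n))) ψ x)) = ∫ x, g x • F x := by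
    congr 1
    ext x
    have : (VectorFourier.fourierIntegral Real.fourierChar volume
        (innerₗ (EuclideanSpace ℝ (Fin n))) ψ x) = G x := congrFun hψ x
    rw [this]
    show F x * (g x : ℂ) = g x • F x
    rw [Complex.real_smul, mul_comm]
  rw [hR] at mult
  exact mult.symm

lemma dense_inner_ne {n : ℕ} (d : EuclideanSpace ℝ (Fin n)) (hd : d ≠ 0) :
    Dense {ξ : EuclideanSpace ℝ (Fin n) | ⟪ξ, d⟫ ≠ 0} := by
  intro x
  rcases eq_or_ne (⟪x, d⟫ : ℝ) 0 with h | h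
  · have h0 : Tendsto (fun m : ℕ => 1/((m:ℝ)+1)) atTop (𝓝 0) :=
      tendsto_one_div_add_atTop_nhds_zero_nat
    have htend : Tendsto (fun m : ℕ => x + (1/((m:ℝ)+1)) • d) atTop (𝓝 x) := by
      have h1 := h0.smul_const d
      rw [zero_smul] at h1
      simpa using tendsto_const_nhds.add h1
    apply mem_closure_of_tendsto htend
    filter_upwards with m
    show ⟪x + (1/((m:ℝ)+1)) • d, d⟫ ≠ 0
    rw [inner_add_left, real_inner_smul_left, h, zero_add]
    have hdd : ⟪d, d⟫ ≠ (0:ℝ) := fun hc => hd (inner_self_eq_zero.1 hc)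
    have hm : (1/((m:ℝ)+1)) ≠ 0 := by positivity
    exact mul_ne_zero hm hdd
  · exact subset_closure h

end Helpers

/-- Uniqueness for the phaseless inverse source problem with two reference
point sources: the phaseless far field data with reference strengths
`τ ∈ {0, τ₁}` and reference points `p ∈ {z₀, z₁}` determine the source. -/
theorem inverse_source_uniqueness_phaseless_two_reference_points
    (n : ℕ) (hn : n = 2 ∨ n = 3) (kmin kmax : ℝ)
    (hk : 0 < kmin) (hkk : kmin < kmax)
    (f₁ f₂ : EuclideanSpace ℝ (Fin n) → ℂ)
    (hf₁ : Integrable f₁) (hcs₁ : HasCompactSupport f₁)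
    (hf₂ : Integrable f₂) (hcs₂ : HasCompactSupport f₂)
    (g : ℝ → ℂ) (hg : ContinuousOn g (Set.Ioo kmin kmax))
    (ka kb : ℝ) (hab : ka < kb) (hsub : Set.Ioo ka kb ⊆ Set.Ioo kmin kmax)
    (hgne : ∀ k ∈ Set.Ioo ka kb, g k ≠ 0)
    (τ₁ : ℂ) (hτ₁ : τ₁ ≠ 0)
    (z₀ z₁ : EuclideanSpace ℝ (Fin n)) (hz : z₀ ≠ z₁)
    (hdata : ∀ xhat : EuclideanSpace ℝ (Fin n), ‖xhat‖ = 1 →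
      ∀ k ∈ Set.Ioo kmin kmax, ∀ τ ∈ ({0, τ₁} : Set ℂ),
      ∀ p ∈ ({z₀, z₁} : Set (EuclideanSpace ℝ (Fin n))),
        ‖g k * farField f₁ xhat k
            + τ * Complex.exp (-(Complex.I * (k : ℂ) * ((⟪xhat, p⟫ : ℝ) : ℂ)))‖
          = ‖g k * farField f₂ xhat k
            + τ * Complex.exp (-(Complex.I * (k : ℂ) * ((⟪xhat, p⟫ : ℝ) : ℂ)))‖) :
    f₁ =ᵐ[volume] f₂ := by
  classical
  set F : EuclideanSpace ℝ (Fin n) → ℂ := fun y => f₁ y - f₂ y with hFdef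
  have hFint : Integrable F := hf₁.sub hf₂
  obtain ⟨R, hR⟩ : ∃ R, (tsupport f₁ ∪ tsupport f₂) ⊆ Metric.closedBall 0 R :=
    (hcs₁.union hcs₂).isBounded.subset_closedBall 0
  have hFsupp : ∀ y, y ∉ Metric.closedBall (0 : EuclideanSpace ℝ (Fin n)) R → F y = 0 := by
    intro y hy
    have h1 : f₁ y = 0 := image_eq_zero_of_notMem_tsupport (fun hc => hy (hR (Or.inl hc)))
    have h2 : f₂ y = 0 := image_eq_zero_of_notMem_tsupport (fun hc => hy (hR (Or.inr hc)))
    simp [hFdef, h1, h2]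
  set d : EuclideanSpace ℝ (Fin n) := z₁ - z₀ with hddef
  have hd : d ≠ 0 := sub_ne_zero.2 (Ne.symm hz)
  -- Step 1: pointwise vanishing where sin ≠ 0
  have key1 : ∀ x : EuclideanSpace ℝ (Fin n), ‖x‖ = 1 → ∀ k ∈ Set.Ioo ka kb,
      Real.sin (k * ⟪x, d⟫) ≠ 0 → farField F x k = 0 := by
    intro x hx k hk hsin
    have hk' := hsub hk
    have h0 := hdata x hx k hk' 0 (Set.mem_insert _ _) z₀ (Set.mem_insert _ _)
    have h1 := hdata x hx k hk' τ₁ (Set.mem_insert_of_mem _ rfl) z₀ (Set.mem_insert _ _)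
    have h2 := hdata x hx k hk' τ₁ (Set.mem_insert_of_mem _ rfl) z₁ (Set.mem_insert_of_mem _ rfl)
    rw [zero_mul, add_zero, add_zero] at h0
    have r1 := abs_alg h0 h1
    have r2 := abs_alg h0 h2
    set a := g k * farField f₁ x k
    set b := g k * farField f₂ x k
    set s₀ : ℝ := ⟪x, z₀⟫
    set s₁ : ℝ := ⟪x, z₁⟫
    have hconj : ∀ s : ℝ, (starRingEnd ℂ) (τ₁ * Complex.exp (-(Complex.I * (k:ℂ) * (s:ℂ))))
        = (starRingEnd ℂ) τ₁ * Complex.exp (Complex.I * (k:ℂ) * (s:ℂ)) := by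
      intro s
      rw [map_mul, conj_osc]
    rw [hconj] at r1 r2
    set u : ℂ := (a - b) * (starRingEnd ℂ) τ₁ * Complex.exp (Complex.I * (k:ℂ) * (s₀:ℂ)) with hu
    have r0' : u.re = 0 := by
      rw [hu, mul_assoc]
      exact r1
    have hθval : s₁ = s₀ + ⟪x, d⟫ := by
      simp only [hddef, inner_sub_right, s₀, s₁]
      ring
    have hexpsplit : Complex.exp (Complex.I * (k:ℂ) * (s₁:ℂ))
        = Complex.exp (Complex.I * (k:ℂ) * (s₀:ℂ)) * Complex.exp (Complex.I * (k:ℂ) * ((⟪x, d⟫ : ℝ):ℂ)) := by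
      rw [← Complex.exp_add]
      congr 1
      rw [hθval]
      push_cast
      ring
    have r1' : (u * Complex.exp (Complex.I * (k:ℂ) * ((⟪x, d⟫ : ℝ):ℂ))).re = 0 := by
      have heq : u * Complex.exp (Complex.I * (k:ℂ) * ((⟪x, d⟫ : ℝ):ℂ))
          = (a - b) * ((starRingEnd ℂ) τ₁ * Complex.exp (Complex.I * (k:ℂ) * (s₁:ℂ))) := by
        rw [hexpsplit, hu]; ring
      rw [heq]
      exact r2
    have hu0 : u = 0 := stepA hsin r0' r1'
    have hab0 : a - b = 0 := by
      rcases mul_eq_zero.1 hu0 with h | h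
      · rcases mul_eq_zero.1 h with h' | h'
        · exact h'
        · exact absurd h' (by simpa using hτ₁)
      · exact absurd h (Complex.exp_ne_zero _)
    have hsubff : a - b = g k * farField F x k := by
      rw [hFdef, farField_sub f₁ f₂ hf₁ hf₂ x k]
      ring
    rw [hsubff] at hab0
    rcases mul_eq_zero.1 hab0 with h | h
    · exact absurd h (hgne k hk)
    · exact h
  -- Step 2: vanishing for all real k, for generic directions
  have key2 : ∀ x : EuclideanSpace ℝ (Fin n), ‖x‖ = 1 → ⟪x, d⟫ ≠ 0 →
      ∀ k : ℝ, farField F x k = 0 := by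
    intro x hx hθ
    obtain ⟨φ, hφdiff, hφeq⟩ := exists_entire R F hFint hFsupp x
    have hzoneset : ∃ k₀ ∈ Set.Ioo ka kb, Real.sin (k₀ * ⟪x, d⟫) ≠ 0 := by
      by_contra hcon
      push_neg at hcon
      have hsubset : Set.Ioo ka kb ⊆ Set.range (fun m : ℤ => (m:ℝ) * Real.pi / ⟪x, d⟫) := by
        intro k hk
        obtain ⟨m, hm⟩ := Real.sin_eq_zero_iff.1 (hcon k hk)
        refine ⟨m, ?_⟩
        rw [div_eq_iff hθ]
        exact hm
      have hcnt : (Set.range (fun m : ℤ => (m:ℝ) * Real.pi / ⟪x, d⟫)).Countable :=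
        Set.countable_range _
      have h1 := measure_mono (μ := volume) hsubset
      rw [hcnt.measure_zero volume, Real.volume_Ioo] at h1
      have := ENNReal.ofReal_eq_zero.1 (le_antisymm h1 (zero_le))
      linarith
    obtain ⟨k₀, hk₀mem, hk₀sin⟩ := hzoneset
    have hUopen : IsOpen {k : ℝ | Real.sin (k * ⟪x, d⟫) ≠ 0} := by
      have hcont : Continuous fun k : ℝ => Real.sin (k * ⟪x, d⟫) :=
        Real.continuous_sin.comp (continuous_mul_right _)
      exact isOpen_ne.preimage hcont
    have hU : (Set.Ioo ka kb ∩ {k : ℝ | Real.sin (k * ⟪x, d⟫) ≠ 0}) ∈ nhds k₀ :=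
      (isOpen_Ioo.inter hUopen).mem_nhds ⟨hk₀mem, hk₀sin⟩
    obtain ⟨r, hr0, hball⟩ := Metric.mem_nhds_iff.1 hU
    set aa : ℕ → ℝ := fun m => k₀ + r/((m:ℝ)+2) with haa
    have hapos : ∀ m : ℕ, 0 < r/((m:ℝ)+2) := by
      intro m; positivity
    have hamem : ∀ m, aa m ∈ Metric.ball k₀ r := by
      intro m
      have hlt : r/((m:ℝ)+2) < r := by
        apply div_lt_self hr0
        have : (0:ℝ) ≤ (m:ℝ) := Nat.cast_nonneg m
        linarith
      have : dist (aa m) k₀ = |r/((m:ℝ)+2)| := by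
        simp [haa, Real.dist_eq, add_sub_cancel_left]
        exact (abs_div _ _).symm
      rw [Metric.mem_ball, this, abs_of_pos (hapos m)]
      exact hlt
    have hane : ∀ m, aa m ≠ k₀ := by
      intro m
      have := hapos m
      simp only [haa]
      intro hc
      have : r/((m:ℝ)+2) = 0 := by linarith [congrArg (fun t => t - k₀) hc, add_sub_cancel_left k₀ (r/((m:ℝ)+2))]
      linarith [hapos m]
    have haz : ∀ m, φ ((aa m : ℝ) : ℂ) = 0 := by
      intro m
      have hmem := hball (hamem m)
      rw [hφeq]
      exact key1 x hx (aa m) hmem.1 hmem.2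
    have htend : Filter.Tendsto (fun m : ℕ => ((aa m : ℝ) : ℂ)) Filter.atTop
        (nhdsWithin ((k₀:ℝ):ℂ) {((k₀:ℝ):ℂ)}ᶜ) := by
      apply tendsto_nhdsWithin_of_tendsto_nhds_of_eventually_within
      · have h0 : Filter.Tendsto (fun m : ℕ => r/((m:ℝ)+2)) Filter.atTop (nhds 0) := by
          have h1 := (tendsto_const_div_atTop_nhds_zero_nat r).comp
            (Filter.tendsto_add_atTop_nat 2)
          have h2 : (fun m : ℕ => r/((m:ℝ)+2)) = (fun n : ℕ => r / (n:ℝ)) ∘ (fun m : ℕ => m + 2) := by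
            funext m
            simp only [Function.comp_apply]
            push_cast
            ring
          rw [h2]
          exact h1
        have h1 : Filter.Tendsto aa Filter.atTop (nhds k₀) := by
          have := Filter.Tendsto.add (tendsto_const_nhds (x := k₀) (f := Filter.atTop)) h0
          simpa [haa] using this
        exact (Complex.continuous_ofReal.tendsto k₀).comp h1
      · filter_upwards with m
        simp only [Set.mem_compl_iff, Set.mem_singleton_iff]
        intro hc
        exact hane m (by exact_mod_cast hc)
    have hfreq : ∃ᶠ z in nhdsWithin ((k₀:ℝ):ℂ) {((k₀:ℝ):ℂ)}ᶜ, φ z = 0 :=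
      htend.frequently (Filter.Frequently.of_forall haz)
    have hanal : AnalyticOnNhd ℂ φ Set.univ :=
      hφdiff.differentiableOn.analyticOnNhd isOpen_univ
    have hzero := hanal.eqOn_zero_of_preconnected_of_frequently_eq_zero
      isPreconnected_univ (Set.mem_univ _) hfreq
    intro k
    have := hzero (Set.mem_univ ((k:ℝ):ℂ))
    rw [← hφeq k]
    exact this
  -- Step 3: Fourier transform vanishes on a dense set
  have key3 : ∀ ξ : EuclideanSpace ℝ (Fin n), ⟪ξ, d⟫ ≠ 0 → 𝓕 F ξ = 0 := by
    intro ξ hξ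
    have hξ0 : ξ ≠ 0 := by
      intro hc
      apply hξ
      simp [hc]
    have hnξ : ‖ξ‖ ≠ 0 := norm_ne_zero_iff.2 hξ0
    set xh : EuclideanSpace ℝ (Fin n) := ‖ξ‖⁻¹ • ξ with hxhdef
    have hxh : ‖xh‖ = 1 := by
      rw [hxhdef, norm_smul, norm_inv, norm_norm, inv_mul_cancel₀ hnξ]
    have hθ : ⟪xh, d⟫ ≠ 0 := by
      rw [hxhdef, real_inner_smul_left]
      exact mul_ne_zero (inv_ne_zero hnξ) hξ
    have hval := key2 xh hxh hθ (2 * Real.pi * ‖ξ‖)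
    rw [← hval]
    rw [Real.fourier_eq']
    unfold farField
    congr 1
    funext v
    rw [smul_eq_mul]
    congr 2
    have hre : (2 * Real.pi * ‖ξ‖) * ⟪xh, v⟫ = 2 * Real.pi * ⟪v, ξ⟫ := by
      rw [hxhdef, real_inner_smul_left, real_inner_comm]
      field_simp
    rw [show -(Complex.I * ((2 * Real.pi * ‖ξ‖ : ℝ):ℂ) * ((⟪xh, v⟫ : ℝ):ℂ))
        = -(Complex.I * (((2 * Real.pi * ‖ξ‖) * ⟪xh, v⟫ : ℝ) : ℂ)) by push_cast; ring]
    rw [hre]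
    push_cast
    ring
  -- Step 4: Fourier transform vanishes everywhere
  have key4 : ∀ ξ, 𝓕 F ξ = 0 := by
    have hdense : Dense {ξ : EuclideanSpace ℝ (Fin n) | ⟪ξ, d⟫ ≠ 0} := dense_inner_ne d hd
    have hcont : Continuous (𝓕 F) :=
      VectorFourier.fourierIntegral_continuous Real.continuous_fourierChar continuous_inner hFint
    have heq : 𝓕 F = fun _ => 0 :=
      hcont.ext_on hdense continuous_const (fun ξ hξ => key3 ξ hξ)
    intro ξ
    rw [heq]
  -- Step 5: conclude
  have hae := fourier_injective F hFint key4
  filter_upwards [hae] with y hy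
  have h0 : f₁ y - f₂ y = 0 := hy
  exact sub_eq_zero.1 h0
end

section
/- Let 0 < k_min < k_max, let f1, f2 : ℝ² → ℂ be integrable with compact support, and let g : ℝ → ℝ be a real-valued continuous function on (k_min, k_max) with g(k) ≠ 0 for all k in some nonempty open subinterval (k_a, k_b) ⊆ (k_min, k_max). Assume that for j = 1, 2, Im f_j(y) ≥ 0 for almost every y ∈ ℝ² and Im f_j > 0 on a set of positive Lebesgue measure. Let τ1 ∈ ℝ \ {0} and z0 ∈ ℝ². If | g(k) u∞_{f1}(x̂, k) + τ e^{−ik⟨x̂, z0⟩} | = | g(k) u∞_{f2}(x̂, k) + τ e^{−ik⟨x̂, z0⟩} | for all unit vectors x̂ ∈ ℝ², all k ∈ (k_min, k_max), and all τ ∈ {0, τ1}, then f1 = f2 almost everywhere. (Uniqueness for the phaseless inverse source problem in ℝ² with a single reference point source, under the sign condition on the imaginary part of the source.) -/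
open MeasureTheory
open scoped RealInnerProductSpace

section AuxPhaseless

open Complex Filter Metric Real SchwartzMap
open scoped Topology FourierTransform ContDiff

variable {V : Type*} [NormedAddCommGroup V] [InnerProductSpace ℝ V]
  [MeasurableSpace V] [BorelSpace V] [FiniteDimensional ℝ V]

private lemma aux_integrable_kernel_mul {f : V → ℂ} (hf : Integrable f)
    (hcs : HasCompactSupport f) {φ : V → ℂ} (hφ : Continuous φ) :
    Integrable (fun y => φ y * f y) := by
  obtain ⟨C, hC⟩ := hcs.exists_bound_of_continuousOn hφ.continuousOn
  refine Integrable.mono' (hf.norm.const_mul (max C 0))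
    (hφ.aestronglyMeasurable.mul hf.1) (Filter.Eventually.of_forall fun y => ?_)
  by_cases hy : y ∈ tsupport f
  · rw [norm_mul]
    exact mul_le_mul_of_nonneg_right (le_max_of_le_left (hC y hy)) (norm_nonneg _)
  · simp [image_eq_zero_of_notMem_tsupport hy]

private lemma aux_integrable_conj {f : V → ℂ} (hf : Integrable f) :
    Integrable (fun y => (starRingEnd ℂ) (f y)) := by
  refine Integrable.mono' hf.norm
    (Complex.continuous_conj.comp_aestronglyMeasurable hf.1)
    (Filter.Eventually.of_forall fun y => ?_)
  simp

private lemma aux_entire {f : V → ℂ} (hf : Integrable f) (hcs : HasCompactSupport f)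
    {r : V → ℝ} (hr : Continuous r) :
    Differentiable ℂ (fun z : ℂ => ∫ y, Complex.exp (-(Complex.I * z * (r y : ℂ))) * f y) := by
  intro z₀
  obtain ⟨M, hM⟩ := hcs.exists_bound_of_continuousOn (hr.norm.continuousOn)
  have hM0 : (0:ℝ) ≤ max M 0 := le_max_right _ _
  set M' := max M 0 with hM'
  have hrM : ∀ y ∈ tsupport f, |r y| ≤ M' := fun y hy =>
    le_max_of_le_left (by simpa using hM y hy)
  have key := hasDerivAt_integral_of_dominated_loc_of_deriv_le (μ := (volume : Measure V))
    (F := fun (z : ℂ) y => Complex.exp (-(Complex.I * z * (r y : ℂ))) * f y)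
    (F' := fun (z : ℂ) y =>
      (-(Complex.I * (r y : ℂ))) * Complex.exp (-(Complex.I * z * (r y : ℂ))) * f y)
    (x₀ := z₀) (s := Metric.ball z₀ 1) (bound := fun y => (M' * Real.exp ((‖z₀‖ + 1) * M')) * ‖f y‖)
    (Metric.ball_mem_nhds z₀ one_pos)
    (Filter.Eventually.of_forall fun z =>
      ((Complex.continuous_exp.comp
        ((continuous_const.mul (Complex.continuous_ofReal.comp hr)).neg)).aestronglyMeasurable.mul
          hf.1))
    (aux_integrable_kernel_mul hf hcs
      (Complex.continuous_exp.comp ((continuous_const.mul (Complex.continuous_ofReal.comp hr)).neg)))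
    (((continuous_const.mul (Complex.continuous_ofReal.comp hr)).neg.mul
      (Complex.continuous_exp.comp
        ((continuous_const.mul (Complex.continuous_ofReal.comp hr)).neg))).aestronglyMeasurable.mul
          hf.1)
    ?_ (hf.norm.const_mul _) ?_
  · exact key.2.differentiableAt
  · refine Filter.Eventually.of_forall fun y => fun z hz => ?_
    by_cases hy : y ∈ tsupport f
    · have h1 : ‖-(Complex.I * (r y : ℂ))‖ = |r y| := by
        simp
      have h2 : ‖Complex.exp (-(Complex.I * z * (r y : ℂ)))‖ = Real.exp (z.im * r y) := by
        rw [Complex.norm_exp]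
        congr 1
        simp [Complex.mul_re, Complex.mul_im]
      have hzb : |z.im| ≤ ‖z₀‖ + 1 := by
        have h3 : ‖z‖ ≤ ‖z₀‖ + 1 := by
          have : ‖z - z₀‖ < 1 := by simpa [dist_eq_norm] using hz
          calc ‖z‖ = ‖z₀ + (z - z₀)‖ := by ring_nf
          _ ≤ ‖z₀‖ + ‖z - z₀‖ := norm_add_le _ _
          _ ≤ ‖z₀‖ + 1 := by linarith
        exact le_trans (Complex.abs_im_le_norm z) h3
      have hexp : z.im * r y ≤ (‖z₀‖ + 1) * M' := by
        calc z.im * r y ≤ |z.im * r y| := le_abs_self _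
        _ = |z.im| * |r y| := abs_mul _ _
        _ ≤ (‖z₀‖ + 1) * M' :=
          mul_le_mul hzb (hrM y hy) (abs_nonneg _) (by positivity)
      rw [norm_mul, norm_mul, h1, h2]
      refine mul_le_mul_of_nonneg_right ?_ (norm_nonneg _)
      exact mul_le_mul (hrM y hy) (Real.exp_le_exp.2 hexp) (Real.exp_nonneg _) hM0
    · simp [image_eq_zero_of_notMem_tsupport hy]
  · refine Filter.Eventually.of_forall fun y => fun z hz => ?_
    have h1 : HasDerivAt (fun z : ℂ => -(Complex.I * z * (r y : ℂ)))
        (-(Complex.I * (r y : ℂ))) z := by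
      have := (((hasDerivAt_id z).const_mul Complex.I).mul_const ((r y : ℂ))).neg
      simpa [mul_comm, mul_assoc, mul_one, Pi.neg_def] using this
    have h2 := (h1.cexp).mul_const (f y)
    exact h2.congr_deriv (by ring)

private lemma aux_entire_zero {E : ℂ → ℂ} (hE : Differentiable ℂ E) {a b : ℝ} (hab : a < b)
    (h0 : ∀ k : ℝ, k ∈ Set.Ioo a b → E (k : ℂ) = 0) : ∀ z : ℂ, E z = 0 := by
  have hA : AnalyticOnNhd ℂ E Set.univ := fun z _ => hE.analyticAt z
  set c : ℝ := (a + b) / 2 with hc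
  have hca : a < c := by rw [hc]; linarith
  have hcb : c < b := by rw [hc]; linarith
  have hbc : (0:ℝ) < b - c := sub_pos.2 hcb
  set u : ℕ → ℂ := fun n => ((c + (b - c) / (n + 2) : ℝ) : ℂ) with hu
  have hmem : ∀ n : ℕ, (c + (b - c) / (n + 2) : ℝ) ∈ Set.Ioo a b := by
    intro n
    have hp : (0:ℝ) < (b - c) / (n + 2 : ℝ) := div_pos hbc (by positivity)
    constructor
    · linarith
    · have : (b - c) / (n + 2 : ℝ) < b - c := by
        rw [div_lt_iff₀ (by positivity)]
        nlinarith [sub_pos.2 hcb]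
      linarith
  have hne : ∀ n : ℕ, u n ≠ (c : ℂ) := by
    intro n h
    have h' : (c + (b - c) / (n + 2) : ℝ) = c := by
      have := Complex.ofReal_injective h
      push_cast at this ⊢
      linarith [this]
    have hp : (0:ℝ) < (b - c) / (n + 2 : ℝ) := div_pos hbc (by positivity)
    linarith
  have h1 : Tendsto (fun n : ℕ => (b - c) / (n + 2 : ℝ)) atTop (𝓝 0) :=
    Tendsto.div_atTop tendsto_const_nhds
      (tendsto_atTop_add_const_right _ 2 tendsto_natCast_atTop_atTop)
  have h2 : Tendsto (fun n : ℕ => (c + (b - c) / (n + 2) : ℝ)) atTop (𝓝 c) := by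
    have := h1.const_add c
    simpa using this
  have h3 : Tendsto u atTop (𝓝 (c : ℂ)) :=
    (Complex.continuous_ofReal.tendsto c).comp h2
  have htend : Tendsto u atTop (𝓝[≠] (c : ℂ)) :=
    tendsto_nhdsWithin_of_tendsto_nhds_of_eventually_within u h3
      (Eventually.of_forall fun n => hne n)
  have freq : ∃ᶠ z in 𝓝[≠] (c : ℂ), E z = 0 :=
    htend.frequently (Frequently.of_forall fun n => h0 _ (hmem n))
  have := hA.eqOn_zero_of_preconnected_of_frequently_eq_zero isPreconnected_univ
    (Set.mem_univ (c : ℂ)) freq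
  exact fun z => this (Set.mem_univ z)

/-- A smooth compactly supported real function, as a complex-valued Schwartz map. -/
private noncomputable def toSchwartzC {g : V → ℝ} (hg : ContDiff ℝ ∞ g)
    (hsupp : HasCompactSupport g) : SchwartzMap V ℂ where
  toFun := fun x => (g x : ℂ)
  smooth' := Complex.ofRealCLM.contDiff.comp hg
  decay' := by
    intro k n
    have heq : ∀ x : V, ‖iteratedFDeriv ℝ n (fun x => (g x : ℂ)) x‖
        = ‖iteratedFDeriv ℝ n g x‖ := fun x =>
      Complex.ofRealLI.norm_iteratedFDeriv_comp_left hg.contDiffAt (mod_cast le_top)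
    have hcont : Continuous fun x => ‖x‖ ^ k * ‖iteratedFDeriv ℝ n g x‖ :=
      (continuous_norm.pow k).mul (hg.continuous_iteratedFDeriv (mod_cast le_top)).norm
    have hcs : HasCompactSupport fun x => ‖x‖ ^ k * ‖iteratedFDeriv ℝ n g x‖ :=
      ((hsupp.iteratedFDeriv n).norm).mul_left
    obtain ⟨C, hC⟩ := hcont.bounded_above_of_compact_support hcs
    exact ⟨C, fun x => by rw [heq]; exact le_trans (le_abs_self _) ((Real.norm_eq_abs _) ▸ hC x)⟩

private lemma aux_ft_inj {h : V → ℂ} (hint : Integrable h)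
    (h0 : ∀ ξ : V, ∫ y, Complex.exp (-(Complex.I * ((⟪ξ, y⟫ : ℝ) : ℂ))) * h y = 0) :
    h =ᵐ[volume] 0 := by
  have hF : ∀ w : V, 𝓕 h w = 0 := by
    intro w
    rw [Real.fourier_eq']
    rw [← h0 ((2 * π) • w)]
    congr 1 with v
    rw [smul_eq_mul]
    congr 2
    rw [real_inner_smul_left, real_inner_comm]
    push_cast
    ring
  apply ae_eq_zero_of_integral_contDiff_smul_eq_zero hint.locallyIntegrable
  intro g hg hgsupp
  set gC : SchwartzMap V ℂ := toSchwartzC hg hgsupp with hgC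
  set ψ : SchwartzMap V ℂ := (FourierTransform.fourierCLE ℂ (SchwartzMap V ℂ)).symm gC with hψ
  have hψF : 𝓕 (⇑ψ) = ⇑gC := by
    have := (FourierTransform.fourierCLE ℂ (SchwartzMap V ℂ)).apply_symm_apply gC
    rw [← this, FourierTransform.fourierCLE_apply]
    rfl
  have mult := VectorFourier.integral_fourierIntegral_smul_eq_flip (L := innerₗ V)
    (μ := (volume : Measure V)) (ν := (volume : Measure V))
    Real.continuous_fourierChar continuous_inner hint ψ.integrable
  have flip_eq : (innerₗ V).flip = innerₗ V := by
    apply LinearMap.ext; intro x; apply LinearMap.ext; intro y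
    simpa using real_inner_comm y x
  rw [flip_eq] at mult
  have hL : (∫ ξ, (VectorFourier.fourierIntegral 𝐞 volume (innerₗ V) h ξ) • ψ ξ) = 0 := by
    have : ∀ ξ, VectorFourier.fourierIntegral 𝐞 volume (innerₗ V) h ξ = 0 := hF
    simp [this]
  rw [hL] at mult
  have hR : (∫ x, h x • (VectorFourier.fourierIntegral 𝐞 volume (innerₗ V) ψ x))
      = ∫ x, h x * (g x : ℂ) := by
    congr 1 with x
    have hx : VectorFourier.fourierIntegral 𝐞 volume (innerₗ V) (⇑ψ) x = gC x := by
      rw [show VectorFourier.fourierIntegral 𝐞 volume (innerₗ V) (⇑ψ) x = 𝓕 (⇑ψ) x from rfl, hψF]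
    rw [hx, smul_eq_mul]
    rfl
  rw [hR] at mult
  have hfin : (∫ x, g x • h x) = ∫ x, h x * (g x : ℂ) := by
    congr 1 with x
    rw [Complex.real_smul, mul_comm]
  rw [hfin, ← mult]

private lemma aux_shift (f : V → ℂ) (a : V) (c k : ℝ) :
    (∫ y, Complex.exp (-(Complex.I * (k : ℂ) * (((⟪a, y⟫ : ℝ) - c : ℝ) : ℂ))) * f y)
    = Complex.exp (Complex.I * (k : ℂ) * (c : ℂ))
      * ∫ y, Complex.exp (-(Complex.I * (k : ℂ) * ((⟪a, y⟫ : ℝ) : ℂ))) * f y := by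
  rw [← MeasureTheory.integral_const_mul]
  congr 1 with y
  rw [← mul_assoc, ← Complex.exp_add]
  congr 1
  push_cast
  ring

private lemma aux_conj (f : V → ℂ) (a : V) (c k : ℝ) :
    (∫ y, Complex.exp (-(Complex.I * (k : ℂ) * ((c - (⟪a, y⟫ : ℝ) : ℝ) : ℂ)))
        * (starRingEnd ℂ) (f y))
    = (starRingEnd ℂ)
        (∫ y, Complex.exp (-(Complex.I * (k : ℂ) * (((⟪a, y⟫ : ℝ) - c : ℝ) : ℂ))) * f y) := by
  rw [← integral_conj]
  congr 1 with y
  rw [map_mul, ← Complex.exp_conj]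
  congr 1
  simp only [map_neg, map_mul, Complex.conj_I, Complex.conj_ofReal]
  push_cast
  ring

private lemma aux_data {γ τ : ℝ} (hγ : γ ≠ 0) (hτ : τ ≠ 0) {F₁ F₂ e : ℂ}
    (he : ‖e‖ = 1)
    (h0 : ‖(γ : ℂ) * F₁‖ = ‖(γ : ℂ) * F₂‖)
    (h1 : ‖(γ : ℂ) * F₁ + (τ : ℂ) * e‖
        = ‖(γ : ℂ) * F₂ + (τ : ℂ) * e‖) :
    ‖F₁‖ = ‖F₂‖
      ∧ (F₁ * (starRingEnd ℂ) e).re = (F₂ * (starRingEnd ℂ) e).re := by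
  constructor
  · have := h0
    rw [norm_mul, norm_mul] at this
    exact mul_left_cancel₀ (by simpa using hγ) this
  · have hsq : Complex.normSq ((γ : ℂ) * F₁ + (τ : ℂ) * e)
        = Complex.normSq ((γ : ℂ) * F₂ + (τ : ℂ) * e) := by
      rw [← Complex.sq_norm, ← Complex.sq_norm, h1]
    have hsq0 : Complex.normSq ((γ : ℂ) * F₁) = Complex.normSq ((γ : ℂ) * F₂) := by
      rw [← Complex.sq_norm, ← Complex.sq_norm, h0]
    rw [Complex.normSq_add, Complex.normSq_add, hsq0] at hsq
    have hre : ((γ : ℂ) * F₁ * (starRingEnd ℂ) ((τ : ℂ) * e)).re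
        = ((γ : ℂ) * F₂ * (starRingEnd ℂ) ((τ : ℂ) * e)).re := by linarith
    have hrw : ∀ F : ℂ, (γ : ℂ) * F * (starRingEnd ℂ) ((τ : ℂ) * e)
        = ((γ * τ : ℝ) : ℂ) * (F * (starRingEnd ℂ) e) := by
      intro F
      rw [map_mul, Complex.conj_ofReal]
      push_cast
      ring
    rw [hrw, hrw, Complex.re_ofReal_mul, Complex.re_ofReal_mul] at hre
    exact mul_left_cancel₀ (mul_ne_zero hγ hτ) hre

end AuxPhaseless

local notation "E2" => EuclideanSpace ℝ (Fin 2)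

/-- Uniqueness for the phaseless inverse source problem in `ℝ²` with a single
reference point source, under the sign condition on the imaginary part of the
source. -/
theorem inverse_source_uniqueness_phaseless_one_reference_point_2D
    (kmin kmax : ℝ) (hk : 0 < kmin) (hkk : kmin < kmax)
    (f₁ f₂ : EuclideanSpace ℝ (Fin 2) → ℂ)
    (hf₁ : Integrable f₁) (hcs₁ : HasCompactSupport f₁)
    (hf₂ : Integrable f₂) (hcs₂ : HasCompactSupport f₂)
    (g : ℝ → ℝ) (hg : ContinuousOn g (Set.Ioo kmin kmax))
    (ka kb : ℝ) (hab : ka < kb) (hsub : Set.Ioo ka kb ⊆ Set.Ioo kmin kmax)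
    (hgne : ∀ k ∈ Set.Ioo ka kb, g k ≠ 0)
    (him₁ : ∀ᵐ y ∂(volume : Measure (EuclideanSpace ℝ (Fin 2))), 0 ≤ (f₁ y).im)
    (him₂ : ∀ᵐ y ∂(volume : Measure (EuclideanSpace ℝ (Fin 2))), 0 ≤ (f₂ y).im)
    (hpos₁ : 0 < volume {y : EuclideanSpace ℝ (Fin 2) | 0 < (f₁ y).im})
    (hpos₂ : 0 < volume {y : EuclideanSpace ℝ (Fin 2) | 0 < (f₂ y).im})
    (τ₁ : ℝ) (hτ₁ : τ₁ ≠ 0) (z₀ : EuclideanSpace ℝ (Fin 2))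
    (hdata : ∀ xhat : EuclideanSpace ℝ (Fin 2), ‖xhat‖ = 1 →
      ∀ k ∈ Set.Ioo kmin kmax, ∀ τ ∈ ({0, (τ₁ : ℂ)} : Set ℂ),
        ‖(g k : ℂ) * farField f₁ xhat k
            + τ * Complex.exp (-(Complex.I * (k : ℂ) * ((⟪xhat, z₀⟫ : ℝ) : ℂ)))‖
          = ‖(g k : ℂ) * farField f₂ xhat k
            + τ * Complex.exp (-(Complex.I * (k : ℂ) * ((⟪xhat, z₀⟫ : ℝ) : ℂ)))‖) :
    f₁ =ᵐ[volume] f₂ := by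
  classical
  -- positivity of the imaginary parts of the total integrals
  have him_int : ∀ (f : E2 → ℂ), Integrable f →
      (∀ᵐ y ∂(volume : Measure E2), 0 ≤ (f y).im) →
      0 < volume {y : E2 | 0 < (f y).im} → 0 < (∫ y, f y).im := by
    intro f hf him hpos
    have hcast : (∫ y, f y).im = ∫ y, (f y).im := by
      have h := integral_im (𝕜 := ℂ) hf
      simpa using h.symm
    rw [hcast, integral_pos_iff_support_of_nonneg_ae him hf.im]
    refine lt_of_lt_of_le hpos (measure_mono ?_)
    intro y hy
    exact ne_of_gt hy
  -- Step 1: the far fields agree for every direction and every real wave number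
  have key : ∀ xhat : E2, ‖xhat‖ = 1 → ∀ k : ℝ, farField f₁ xhat k = farField f₂ xhat k := by
    intro xhat hx
    set φ : ℝ := ⟪xhat, z₀⟫ with hφdef
    have hrc : Continuous fun y : E2 => (⟪xhat, y⟫ : ℝ) - φ :=
      (continuous_const.inner continuous_id).sub continuous_const
    have hrc' : Continuous fun y : E2 => φ - (⟪xhat, y⟫ : ℝ) :=
      continuous_const.sub (continuous_const.inner continuous_id)
    set A₁ : ℂ → ℂ := fun z =>
      ∫ y, Complex.exp (-(Complex.I * z * (((⟪xhat, y⟫ : ℝ) - φ : ℝ) : ℂ))) * f₁ y with hA₁def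
    set A₂ : ℂ → ℂ := fun z =>
      ∫ y, Complex.exp (-(Complex.I * z * (((⟪xhat, y⟫ : ℝ) - φ : ℝ) : ℂ))) * f₂ y with hA₂def
    set B₁ : ℂ → ℂ := fun z =>
      ∫ y, Complex.exp (-(Complex.I * z * ((φ - (⟪xhat, y⟫ : ℝ) : ℝ) : ℂ)))
        * (starRingEnd ℂ) (f₁ y) with hB₁def
    set B₂ : ℂ → ℂ := fun z =>
      ∫ y, Complex.exp (-(Complex.I * z * ((φ - (⟪xhat, y⟫ : ℝ) : ℝ) : ℂ)))
        * (starRingEnd ℂ) (f₂ y) with hB₂def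
    have hcs₁' : HasCompactSupport fun y => (starRingEnd ℂ) (f₁ y) :=
      hcs₁.comp_left (by simp)
    have hcs₂' : HasCompactSupport fun y => (starRingEnd ℂ) (f₂ y) :=
      hcs₂.comp_left (by simp)
    have hdA₁ : Differentiable ℂ A₁ := aux_entire hf₁ hcs₁ hrc
    have hdA₂ : Differentiable ℂ A₂ := aux_entire hf₂ hcs₂ hrc
    have hdB₁ : Differentiable ℂ B₁ := aux_entire (aux_integrable_conj hf₁) hcs₁' hrc'
    have hdB₂ : Differentiable ℂ B₂ := aux_entire (aux_integrable_conj hf₂) hcs₂' hrc'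
    -- basic relations on the real axis
    have hA₁k : ∀ k : ℝ, A₁ (k : ℂ)
        = Complex.exp (Complex.I * (k : ℂ) * (φ : ℂ)) * farField f₁ xhat k :=
      fun k => aux_shift f₁ xhat φ k
    have hA₂k : ∀ k : ℝ, A₂ (k : ℂ)
        = Complex.exp (Complex.I * (k : ℂ) * (φ : ℂ)) * farField f₂ xhat k :=
      fun k => aux_shift f₂ xhat φ k
    have hB₁k : ∀ k : ℝ, B₁ (k : ℂ) = (starRingEnd ℂ) (A₁ (k : ℂ)) :=
      fun k => aux_conj f₁ xhat φ k
    have hB₂k : ∀ k : ℝ, B₂ (k : ℂ) = (starRingEnd ℂ) (A₂ (k : ℂ)) :=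
      fun k => aux_conj f₂ xhat φ k
    -- extract the two identities from the data on (ka, kb)
    have hdata' : ∀ k : ℝ, k ∈ Set.Ioo ka kb →
        ‖A₁ (k : ℂ)‖ = ‖A₂ (k : ℂ)‖ ∧ (A₁ (k : ℂ)).re = (A₂ (k : ℂ)).re := by
      intro k hkab
      have hk' := hsub hkab
      have h0 := hdata xhat hx k hk' 0 (by simp)
      have h1 := hdata xhat hx k hk' (τ₁ : ℂ) (by simp)
      simp only [zero_mul, add_zero] at h0
      have he : ‖Complex.exp (-(Complex.I * (k : ℂ) * ((φ : ℝ) : ℂ)))‖ = 1 := by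
        rw [Complex.norm_exp]
        norm_num [Complex.mul_re, Complex.mul_im]
      obtain ⟨habs, hre⟩ := aux_data (hgne k hkab) hτ₁ he h0 h1
      have hconj : (starRingEnd ℂ) (Complex.exp (-(Complex.I * (k : ℂ) * ((φ : ℝ) : ℂ))))
          = Complex.exp (Complex.I * (k : ℂ) * (φ : ℂ)) := by
        rw [← Complex.exp_conj]
        congr 1
        simp [map_neg, map_mul, Complex.conj_I, Complex.conj_ofReal]
      rw [hconj] at hre
      constructor
      · rw [hA₁k, hA₂k, norm_mul, norm_mul, habs]
      · rw [hA₁k, hA₂k]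
        rw [mul_comm (Complex.exp _) (farField f₁ xhat k),
          mul_comm (Complex.exp _) (farField f₂ xhat k)]
        exact hre
    -- analytic continuation of the real-part identity
    have hre_all : ∀ k : ℝ, (A₁ (k : ℂ)).re = (A₂ (k : ℂ)).re := by
      have hΦ : Differentiable ℂ fun z => (A₁ z - A₂ z) + (B₁ z - B₂ z) :=
        (hdA₁.sub hdA₂).add (hdB₁.sub hdB₂)
      have hzero : ∀ k : ℝ, k ∈ Set.Ioo ka kb →
          (A₁ (k : ℂ) - A₂ (k : ℂ)) + (B₁ (k : ℂ) - B₂ (k : ℂ)) = 0 := by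
        intro k hkab
        rw [hB₁k, hB₂k, ← map_sub, Complex.add_conj]
        have := (hdata' k hkab).2
        simp [Complex.sub_re, this]
      have := aux_entire_zero hΦ hab hzero
      intro k
      have hk := this (k : ℂ)
      rw [hB₁k, hB₂k, ← map_sub, Complex.add_conj] at hk
      have : (2 * (A₁ (k : ℂ) - A₂ (k : ℂ)).re : ℝ) = 0 := by exact_mod_cast hk
      have h2 : (A₁ (k : ℂ) - A₂ (k : ℂ)).re = 0 := by linarith
      rw [Complex.sub_re] at h2
      linarith
    -- analytic continuation of the modulus identity
    have habs_all : ∀ k : ℝ, Complex.normSq (A₁ (k : ℂ)) = Complex.normSq (A₂ (k : ℂ)) := by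
      have hΨ : Differentiable ℂ fun z => A₁ z * B₁ z - A₂ z * B₂ z :=
        (hdA₁.mul hdB₁).sub (hdA₂.mul hdB₂)
      have hzero : ∀ k : ℝ, k ∈ Set.Ioo ka kb →
          A₁ (k : ℂ) * B₁ (k : ℂ) - A₂ (k : ℂ) * B₂ (k : ℂ) = 0 := by
        intro k hkab
        rw [hB₁k, hB₂k, Complex.mul_conj, Complex.mul_conj, sub_eq_zero]
        have := (hdata' k hkab).1
        rw [← Complex.sq_norm, ← Complex.sq_norm, this]
      have := aux_entire_zero hΨ hab hzero
      intro k
      have hk := this (k : ℂ)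
      rw [hB₁k, hB₂k, Complex.mul_conj, Complex.mul_conj, sub_eq_zero] at hk
      exact_mod_cast hk
    -- at k = 0 both imaginary parts are positive
    have hA₁0 : A₁ 0 = ∫ y, f₁ y := by
      rw [hA₁def]
      simp
    have hA₂0 : A₂ 0 = ∫ y, f₂ y := by
      rw [hA₂def]
      simp
    have him₁' : 0 < (A₁ 0).im := by
      rw [hA₁0]; exact him_int f₁ hf₁ him₁ hpos₁
    have him₂' : 0 < (A₂ 0).im := by
      rw [hA₂0]; exact him_int f₂ hf₂ him₂ hpos₂
    -- find a small interval around 0 where both imaginary parts are positive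
    have hcont₁ : Continuous fun k : ℝ => (A₁ (k : ℂ)).im :=
      Complex.continuous_im.comp (hdA₁.continuous.comp Complex.continuous_ofReal)
    have hcont₂ : Continuous fun k : ℝ => (A₂ (k : ℂ)).im :=
      Complex.continuous_im.comp (hdA₂.continuous.comp Complex.continuous_ofReal)
    have hev : ∀ᶠ k : ℝ in nhds 0, 0 < (A₁ (k : ℂ)).im ∧ 0 < (A₂ (k : ℂ)).im := by
      have e₁ : ∀ᶠ k : ℝ in nhds 0, 0 < (A₁ (k : ℂ)).im :=
        (hcont₁.tendsto 0).eventually (eventually_gt_nhds (by simpa using him₁'))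
      have e₂ : ∀ᶠ k : ℝ in nhds 0, 0 < (A₂ (k : ℂ)).im :=
        (hcont₂.tendsto 0).eventually (eventually_gt_nhds (by simpa using him₂'))
      exact e₁.and e₂
    obtain ⟨δ, hδpos, hδ⟩ := Metric.eventually_nhds_iff.1 hev
    -- on (-δ, δ) the two functions agree
    have heq_small : ∀ k : ℝ, k ∈ Set.Ioo (-δ) δ → A₁ (k : ℂ) = A₂ (k : ℂ) := by
      intro k hkd
      have hdist : dist k 0 < δ := by
        rw [Real.dist_eq, sub_zero, abs_lt]
        exact ⟨hkd.1, hkd.2⟩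
      obtain ⟨hi₁, hi₂⟩ := hδ hdist
      have hre := hre_all k
      have hsq := habs_all k
      rw [Complex.normSq_apply, Complex.normSq_apply, hre] at hsq
      have him : (A₁ (k : ℂ)).im = (A₂ (k : ℂ)).im := by nlinarith
      exact Complex.ext hre him
    -- analytic continuation: the far fields agree for all real k
    have hD := aux_entire_zero (hdA₁.sub hdA₂) (show -δ < δ by linarith)
      (fun k hkd => sub_eq_zero.2 (heq_small k hkd))
    intro k
    have := sub_eq_zero.1 (hD (k : ℂ))
    rw [hA₁k, hA₂k] at this
    exact mul_left_cancel₀ (Complex.exp_ne_zero _) this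
  -- Step 2: equality of Fourier transforms, and conclusion
  have hker : ∀ ξ : E2, Continuous fun y : E2 =>
      Complex.exp (-(Complex.I * ((⟪ξ, y⟫ : ℝ) : ℂ))) := fun ξ =>
    Complex.continuous_exp.comp
      ((continuous_const.mul (Complex.continuous_ofReal.comp
        (continuous_const.inner continuous_id))).neg)
  have hFT : ∀ ξ : E2, ∫ y, Complex.exp (-(Complex.I * ((⟪ξ, y⟫ : ℝ) : ℂ)))
      * (f₁ y - f₂ y) = 0 := by
    intro ξ
    have hint₁ : Integrable fun y => Complex.exp (-(Complex.I * ((⟪ξ, y⟫ : ℝ) : ℂ))) * f₁ y :=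
      aux_integrable_kernel_mul hf₁ hcs₁ (hker ξ)
    have hint₂ : Integrable fun y => Complex.exp (-(Complex.I * ((⟪ξ, y⟫ : ℝ) : ℂ))) * f₂ y :=
      aux_integrable_kernel_mul hf₂ hcs₂ (hker ξ)
    have hsplit : (∫ y, Complex.exp (-(Complex.I * ((⟪ξ, y⟫ : ℝ) : ℂ))) * (f₁ y - f₂ y))
        = (∫ y, Complex.exp (-(Complex.I * ((⟪ξ, y⟫ : ℝ) : ℂ))) * f₁ y)
          - ∫ y, Complex.exp (-(Complex.I * ((⟪ξ, y⟫ : ℝ) : ℂ))) * f₂ y := by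
      rw [← integral_sub hint₁ hint₂]
      congr 1 with y
      ring
    rw [hsplit, sub_eq_zero]
    by_cases hξ : ξ = 0
    · subst hξ
      have hx : ‖(EuclideanSpace.single (0 : Fin 2) (1 : ℝ) : E2)‖ = 1 := by
        rw [EuclideanSpace.norm_single]
        norm_num
      have h0 := key _ hx 0
      simp only [farField] at h0
      simpa using h0
    · set xhat : E2 := ‖ξ‖⁻¹ • ξ with hxhat
      have hx : ‖xhat‖ = 1 := norm_smul_inv_norm hξ
      have hk := key xhat hx ‖ξ‖
      simp only [farField] at hk
      have hinner : ∀ y : E2, (‖ξ‖ : ℝ) * (⟪xhat, y⟫ : ℝ) = (⟪ξ, y⟫ : ℝ) := by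
        intro y
        rw [hxhat, real_inner_smul_left, ← mul_assoc,
          mul_inv_cancel₀ (norm_ne_zero_iff.2 hξ), one_mul]
      have hrw : ∀ (f : E2 → ℂ),
          (∫ y, Complex.exp (-(Complex.I * ((‖ξ‖ : ℝ) : ℂ) * ((⟪xhat, y⟫ : ℝ) : ℂ))) * f y)
          = ∫ y, Complex.exp (-(Complex.I * ((⟪ξ, y⟫ : ℝ) : ℂ))) * f y := by
        intro f
        congr 1 with y
        rw [mul_assoc, ← Complex.ofReal_mul, hinner y]
      rw [hrw f₁, hrw f₂] at hk
      exact hk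
  have hsub_ae := aux_ft_inj (hf₁.sub hf₂) hFT
  filter_upwards [hsub_ae] with y hy
  exact sub_eq_zero.1 hy
end

section
/- Let n ≥ 1, 0 < k_min < k_max, let f : ℝ^n → ℂ be integrable with support contained in a compact set D, let g : [k_min, k_max] → ℂ be continuously differentiable, and let x̂ ∈ ℝ^n be a unit vector. Define G(z) := ∫_{k_min}^{k_max} g(k) u∞_f(x̂, k) e^{ik⟨x̂, z⟩} dk. If z ∈ ℝ^n is such that d := inf_{y ∈ D} |⟨x̂, z − y⟩| > 0, then |G(z)| ≤ (1/d) · ‖f‖_{L¹} · ( |g(k_min)| + |g(k_max)| + ∫_{k_min}^{k_max} |g'(k)| dk ). (The indicator functional decays like the reciprocal of the distance of the sampling point from the strip S_D(x̂) containing the source support.) -/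
open MeasureTheory intervalIntegral
open scoped RealInnerProductSpace

lemma keyIBP (kmin kmax : ℝ) (hkk : kmin ≤ kmax) (g g' : ℝ → ℂ)
    (hg : ∀ k ∈ Set.Icc kmin kmax, HasDerivAt g (g' k) k)
    (hg' : ContinuousOn g' (Set.Icc kmin kmax))
    (t : ℝ) (ht : t ≠ 0) :
    ‖∫ k in kmin..kmax, g k * Complex.exp (Complex.I * k * t)‖
      ≤ (‖g kmin‖ + ‖g kmax‖ + ∫ k in kmin..kmax, ‖g' k‖) / |t| := by
  set c : ℂ := Complex.I * t with hc
  have hcne : c ≠ 0 := by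
    simp [hc, Complex.I_ne_zero, Complex.ofReal_eq_zero, ht]
  have hcnorm : ‖c‖ = |t| := by
    simp [hc]
  have hgc : ContinuousOn g (Set.Icc kmin kmax) := fun k hk =>
    ((hg k hk).continuousAt).continuousWithinAt
  have hecont : Continuous fun k : ℝ => Complex.exp (c * k) :=
    Complex.continuous_exp.comp (by continuity)
  have hederiv : ∀ k : ℝ, HasDerivAt (fun k : ℝ => Complex.exp (c * k)) (c * Complex.exp (c * k)) k := by
    intro k
    have h1 : HasDerivAt (fun k : ℝ => c * (k : ℂ)) c k := by
      simpa using (Complex.ofRealCLM.hasDerivAt (x := k)).const_mul c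
    simpa [mul_comm] using h1.cexp
  have hF : ∀ k ∈ Set.Icc kmin kmax,
      HasDerivAt (fun k => g k * Complex.exp (c * k) / c)
        (g' k * Complex.exp (c * k) / c + g k * Complex.exp (c * k)) k := by
    intro k hk
    have := ((hg k hk).mul (hederiv k)).div_const c
    refine this.congr_deriv ?_
    rw [add_div, mul_div_assoc (g k), mul_div_cancel_left₀ _ hcne]
  have heq : ∀ k : ℝ, Complex.I * k * t = c * k := by
    intro k; rw [hc]; ring
  have hInt1 : IntervalIntegrable (fun k => g' k * Complex.exp (c * k) / c) volume kmin kmax := by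
    apply ContinuousOn.intervalIntegrable
    rw [Set.uIcc_of_le hkk]
    exact ((hg'.mul (hecont.continuousOn)).div_const c)
  have hInt2 : IntervalIntegrable (fun k => g k * Complex.exp (c * k)) volume kmin kmax := by
    apply ContinuousOn.intervalIntegrable
    rw [Set.uIcc_of_le hkk]
    exact hgc.mul hecont.continuousOn
  have hfund :
      (∫ k in kmin..kmax, (g' k * Complex.exp (c * k) / c + g k * Complex.exp (c * k)))
        = g kmax * Complex.exp (c * kmax) / c - g kmin * Complex.exp (c * kmin) / c := by
    apply integral_eq_sub_of_hasDerivAt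
    · intro k hk; exact hF k (by rwa [Set.uIcc_of_le hkk] at hk)
    · exact hInt1.add hInt2
  have hsplit : (∫ k in kmin..kmax, g k * Complex.exp (c * k))
      = g kmax * Complex.exp (c * kmax) / c - g kmin * Complex.exp (c * kmin) / c
        - ∫ k in kmin..kmax, g' k * Complex.exp (c * k) / c := by
    rw [← hfund, integral_add hInt1 hInt2]; ring
  have hnorme : ∀ k : ℝ, ‖Complex.exp (c * k)‖ = 1 := by
    intro k
    rw [Complex.norm_exp]
    simp [hc]
  have hbound3 : ‖∫ k in kmin..kmax, g' k * Complex.exp (c * k) / c‖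
      ≤ (∫ k in kmin..kmax, ‖g' k‖) / |t| := by
    calc ‖∫ k in kmin..kmax, g' k * Complex.exp (c * k) / c‖
        ≤ ∫ k in kmin..kmax, ‖g' k * Complex.exp (c * k) / c‖ :=
          intervalIntegral.norm_integral_le_integral_norm hkk
      _ = ∫ k in kmin..kmax, ‖g' k‖ / |t| := by
          congr 1; ext k
          rw [norm_div, norm_mul, hnorme, hcnorm, mul_one]
      _ = (∫ k in kmin..kmax, ‖g' k‖) / |t| := by
          rw [intervalIntegral.integral_div]
  calc ‖∫ k in kmin..kmax, g k * Complex.exp (Complex.I * k * t)‖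
      = ‖∫ k in kmin..kmax, g k * Complex.exp (c * k)‖ := by
        congr 1; apply intervalIntegral.integral_congr; intro k _; simp only [heq k]
    _ ≤ ‖g kmax * Complex.exp (c * kmax) / c‖ + ‖g kmin * Complex.exp (c * kmin) / c‖
        + ‖∫ k in kmin..kmax, g' k * Complex.exp (c * k) / c‖ := by
        rw [hsplit]
        refine (norm_sub_le _ _).trans ?_
        gcongr
        exact norm_sub_le _ _
    _ ≤ ‖g kmax‖ / |t| + ‖g kmin‖ / |t| + (∫ k in kmin..kmax, ‖g' k‖) / |t| := by
        gcongr
        · rw [norm_div, norm_mul, hnorme, hcnorm, mul_one]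
        · rw [norm_div, norm_mul, hnorme, hcnorm, mul_one]
    _ = (‖g kmin‖ + ‖g kmax‖ + ∫ k in kmin..kmax, ‖g' k‖) / |t| := by ring

/-- The direct sampling indicator functional
`G(z) = ∫_{k_min}^{k_max} g(k) u∞_f(x̂,k) e^{ik⟨x̂,z⟩} dk` decays like the
reciprocal of the distance `d = inf_{y ∈ D} |⟨x̂, z - y⟩|` of the sampling
point `z` from the strip `S_D(x̂)` containing the source support. -/
theorem indicator_decay_away_from_strip
    (n : ℕ) (hn : 1 ≤ n) (kmin kmax : ℝ) (hk : 0 < kmin) (hkk : kmin < kmax)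
    (f : EuclideanSpace ℝ (Fin n) → ℂ) (hf : Integrable f)
    (D : Set (EuclideanSpace ℝ (Fin n))) (hD : IsCompact D)
    (hsupp : Function.support f ⊆ D)
    (g g' : ℝ → ℂ)
    (hg : ∀ k ∈ Set.Icc kmin kmax, HasDerivAt g (g' k) k)
    (hg' : ContinuousOn g' (Set.Icc kmin kmax))
    (xhat : EuclideanSpace ℝ (Fin n)) (hx : ‖xhat‖ = 1)
    (z : EuclideanSpace ℝ (Fin n)) (d : ℝ)
    (hd : d = sInf ((fun y => |(⟪xhat, z - y⟫ : ℝ)|) '' D)) (hdpos : 0 < d) :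
    ‖(∫ k in kmin..kmax,
          g k * farField f xhat k
            * Complex.exp (Complex.I * (k : ℂ) * ((⟪xhat, z⟫ : ℝ) : ℂ)))‖
      ≤ (1 / d) * (∫ y, ‖f y‖) *
          (‖g kmin‖ + ‖g kmax‖
            + ∫ k in kmin..kmax, ‖g' k‖) := by
  have hkk' : kmin ≤ kmax := hkk.le
  set C : ℝ := ‖g kmin‖ + ‖g kmax‖ + ∫ k in kmin..kmax, ‖g' k‖ with hC
  have hintg' : 0 ≤ ∫ k in kmin..kmax, ‖g' k‖ :=
    intervalIntegral.integral_nonneg hkk' (fun _ _ => norm_nonneg _)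
  have hCnn : 0 ≤ C := by positivity
  set t : EuclideanSpace ℝ (Fin n) → ℝ := fun y => ⟪xhat, z - y⟫ with htdef
  have hdle : ∀ y ∈ D, d ≤ |t y| := by
    intro y hy
    rw [hd]
    exact csInf_le ⟨0, fun r hr => by obtain ⟨w, _, rfl⟩ := hr; exact abs_nonneg _⟩
      ⟨y, hy, rfl⟩
  have hgc : ContinuousOn g (Set.Icc kmin kmax) := fun k hk =>
    ((hg k hk).continuousAt).continuousWithinAt
  have htcont : Continuous t := by
    apply Continuous.inner continuous_const
    exact continuous_const.sub continuous_id
  -- rewrite the integrand as an inner integral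
  have hkey : ∀ k : ℝ,
      g k * farField f xhat k * Complex.exp (Complex.I * (k : ℂ) * ((⟪xhat, z⟫ : ℝ) : ℂ))
      = ∫ y, g k * (f y * Complex.exp (Complex.I * (k : ℂ) * ((t y : ℝ) : ℂ))) := by
    intro k
    rw [farField]
    rw [mul_comm (g k * _), ← mul_assoc, ← MeasureTheory.integral_const_mul]
    congr 1; ext y
    have : (t y : ℂ) = ((⟪xhat, z⟫ : ℝ) : ℂ) - ((⟪xhat, y⟫ : ℝ) : ℂ) := by
      rw [htdef]; push_cast [inner_sub_right]; ring
    rw [this, mul_sub, sub_eq_add_neg, Complex.exp_add]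
    ring
  have hnorme : ∀ (k r : ℝ), ‖Complex.exp (Complex.I * k * r)‖ = 1 := by
    intro k r
    rw [Complex.norm_exp]
    simp
  -- integrability on the product
  have hgInt : IntegrableOn (fun k => ‖g k‖) (Set.Ioc kmin kmax) :=
    (hgc.norm.integrableOn_compact isCompact_Icc).mono_set Set.Ioc_subset_Icc_self
  have hgaesm : AEStronglyMeasurable g (volume.restrict (Set.Ioc kmin kmax)) :=
    (hgc.mono Set.Ioc_subset_Icc_self).aestronglyMeasurable measurableSet_Ioc
  set F : ℝ × EuclideanSpace ℝ (Fin n) → ℂ :=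
    fun p => g p.1 * (f p.2 * Complex.exp (Complex.I * (p.1 : ℂ) * ((t p.2 : ℝ) : ℂ))) with hFdef
  have hecont : Continuous fun p : ℝ × EuclideanSpace ℝ (Fin n) =>
      Complex.exp (Complex.I * (p.1 : ℂ) * ((t p.2 : ℝ) : ℂ)) := by
    apply Complex.continuous_exp.comp
    exact (continuous_const.mul (Complex.continuous_ofReal.comp continuous_fst)).mul
      (Complex.continuous_ofReal.comp (htcont.comp continuous_snd))
  have hFaesm : AEStronglyMeasurable F ((volume.restrict (Set.Ioc kmin kmax)).prod volume) :=
    by rw [hFdef]; exact hgaesm.comp_fst.mul (hf.aestronglyMeasurable.comp_snd.mul hecont.aestronglyMeasurable)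
  have hFint : Integrable F ((volume.restrict (Set.Ioc kmin kmax)).prod volume) := by
    have hbd : Integrable (fun p : ℝ × EuclideanSpace ℝ (Fin n) => ‖g p.1‖ * ‖f p.2‖)
        ((volume.restrict (Set.Ioc kmin kmax)).prod volume) :=
      Integrable.mul_prod hgInt hf.norm
    refine hbd.mono' hFaesm ?_
    filter_upwards with p
    rw [hFdef]
    simp only [norm_mul, hnorme, mul_one, le_refl]
  have hswap :
      (∫ k in kmin..kmax, g k * farField f xhat k
          * Complex.exp (Complex.I * (k : ℂ) * ((⟪xhat, z⟫ : ℝ) : ℂ)))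
        = ∫ y, f y * ∫ k in kmin..kmax,
            g k * Complex.exp (Complex.I * (k : ℂ) * ((t y : ℝ) : ℂ)) := by
    calc (∫ k in kmin..kmax, g k * farField f xhat k
          * Complex.exp (Complex.I * (k : ℂ) * ((⟪xhat, z⟫ : ℝ) : ℂ)))
        = ∫ k in kmin..kmax, ∫ y,
            g k * (f y * Complex.exp (Complex.I * (k : ℂ) * ((t y : ℝ) : ℂ))) :=
          intervalIntegral.integral_congr fun k _ => hkey k
      _ = ∫ k in Set.Ioc kmin kmax, ∫ y,
            g k * (f y * Complex.exp (Complex.I * (k : ℂ) * ((t y : ℝ) : ℂ))) :=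
          intervalIntegral.integral_of_le hkk'
      _ = ∫ y, ∫ k in Set.Ioc kmin kmax,
            g k * (f y * Complex.exp (Complex.I * (k : ℂ) * ((t y : ℝ) : ℂ))) :=
          integral_integral_swap hFint
      _ = ∫ y, f y * ∫ k in kmin..kmax,
            g k * Complex.exp (Complex.I * (k : ℂ) * ((t y : ℝ) : ℂ)) := by
          congr 1; funext y
          rw [show (fun k => g k * (f y * Complex.exp (Complex.I * (k : ℂ) * ((t y : ℝ) : ℂ))))
              = fun k => f y * (g k * Complex.exp (Complex.I * (k : ℂ) * ((t y : ℝ) : ℂ)))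
            from funext fun k => by ring]
          rw [MeasureTheory.integral_const_mul, intervalIntegral.integral_of_le hkk']
  have hb : ∀ y, ‖f y * ∫ k in kmin..kmax,
      g k * Complex.exp (Complex.I * (k : ℂ) * ((t y : ℝ) : ℂ))‖ ≤ ‖f y‖ * (C / d) := by
    intro y
    by_cases hy : f y = 0
    · rw [hy]
      simp only [zero_mul, norm_zero, norm_zero]
      positivity
    · have hyD : y ∈ D := hsupp hy
      have h1 : d ≤ |t y| := hdle y hyD
      have ht0 : t y ≠ 0 := by
        intro h; rw [h] at h1; simp only [abs_zero] at h1; linarith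
      rw [norm_mul]
      refine mul_le_mul_of_nonneg_left ?_ (norm_nonneg _)
      calc ‖∫ k in kmin..kmax, g k * Complex.exp (Complex.I * (k : ℂ) * ((t y : ℝ) : ℂ))‖
          ≤ C / |t y| := keyIBP kmin kmax hkk' g g' hg hg' (t y) ht0
        _ ≤ C / d := by gcongr
  rw [hswap]
  calc ‖∫ y, f y * ∫ k in kmin..kmax,
        g k * Complex.exp (Complex.I * (k : ℂ) * ((t y : ℝ) : ℂ))‖
      ≤ ∫ y, ‖f y‖ * (C / d) :=
        norm_integral_le_of_norm_le (hf.norm.mul_const _) (Filter.Eventually.of_forall hb)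
    _ = (∫ y, ‖f y‖) * (C / d) := by rw [MeasureTheory.integral_mul_const]
    _ = 1 / d * (∫ y, ‖f y‖) * C := by
        field_simp
end

section
/- Let n ≥ 1, 0 < k_min < k_max, let f : ℝ^n → ℂ be integrable with compact support, let g : [k_min, k_max] → ℂ be continuous, let x̂ ∈ ℝ^n be a unit vector, let τ ∈ ℂ, and let z0, z ∈ ℝ^n. Define G(w) := ∫_{k_min}^{k_max} g(k) u∞_f(x̂, k) e^{ik⟨x̂, w⟩} dk for w ∈ ℝ^n, and define F(k) := | g(k) u∞_f(x̂, k) + τ e^{−ik⟨x̂, z0⟩} |² − | g(k) u∞_f(x̂, k) |² − |τ|². Then ∫_{k_min}^{k_max} F(k) cos( k ⟨x̂, z − z0⟩ ) dk = V + conj(V), where V := (conj(τ)/2) · ( G(z) + G(2 z0 − z) ). (The phaseless indicator of the direct sampling method equals twice the real part of a superposition of the phased indicator at z and at the point 2z0 − z symmetric to z about the reference point z0.) -/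
open MeasureTheory intervalIntegral
open scoped RealInnerProductSpace

/-- The indicator functional
`G(w) = ∫_{k_min}^{k_max} g(k) u∞_f(x̂,k) e^{ik⟨x̂,w⟩} dk` of the direct
sampling method. -/
noncomputable def indicatorG {n : ℕ} (kmin kmax : ℝ)
    (f : EuclideanSpace ℝ (Fin n) → ℂ) (g : ℝ → ℂ)
    (xhat w : EuclideanSpace ℝ (Fin n)) : ℂ :=
  ∫ k in kmin..kmax,
    g k * farField f xhat k * Complex.exp (Complex.I * (k : ℂ) * ((⟪xhat, w⟫ : ℝ) : ℂ))

lemma key_pointwise (k a c : ℝ) (h τ : ℂ) :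
    ((((‖h + τ * Complex.exp (-(Complex.I * (k:ℂ) * (a:ℂ)))‖)^2
        - (‖h‖)^2 - (‖τ‖)^2) * Real.cos (k * (c - a)) : ℝ) : ℂ)
    = (starRingEnd ℂ τ / 2)
        * (h * Complex.exp (Complex.I * (k:ℂ) * (c:ℂ))
            + h * Complex.exp (Complex.I * (k:ℂ) * ((2*a - c : ℝ):ℂ)))
      + starRingEnd ℂ ((starRingEnd ℂ τ / 2)
        * (h * Complex.exp (Complex.I * (k:ℂ) * (c:ℂ))
            + h * Complex.exp (Complex.I * (k:ℂ) * ((2*a - c : ℝ):ℂ)))) := by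
  have habs : ∀ w : ℂ, ((‖w‖ : ℂ))^2 = w * starRingEnd ℂ w := by
    intro w
    rw [← Complex.ofReal_pow, Complex.sq_norm, Complex.mul_conj]
  push_cast
  rw [habs, habs, habs, Complex.cos]
  simp only [map_add, map_mul, map_sub, map_div₀, ← Complex.exp_conj, map_neg,
    Complex.conj_I, Complex.conj_ofReal, Complex.conj_conj, map_ofNat]
  rw [show ((↑k * (↑c - ↑a)) * Complex.I : ℂ) = Complex.I * k * c - Complex.I * k * a by ring,
    show (-(↑k * (↑c - ↑a)) * Complex.I : ℂ) = Complex.I * k * a - Complex.I * k * c by ring,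
    show ((Complex.I * ↑k * (2 * ↑a - ↑c)) : ℂ)
      = Complex.I * k * a + Complex.I * k * a - Complex.I * k * c by ring,
    show ((-Complex.I * ↑k * (2 * ↑a - ↑c)) : ℂ)
      = Complex.I * k * c - (Complex.I * k * a + Complex.I * k * a) by ring,
    show ((-Complex.I * ↑k * ↑c) : ℂ) = (0:ℂ) - Complex.I * k * c by ring,
    show ((-(Complex.I * ↑k * ↑a)) : ℂ) = (0:ℂ) - Complex.I * k * a by ring]
  simp only [Complex.exp_sub, Complex.exp_add, Complex.exp_zero]
  set u := Complex.exp (Complex.I * k * a)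
  set v := Complex.exp (Complex.I * k * c)
  have hu : u ≠ 0 := Complex.exp_ne_zero _
  have hv : v ≠ 0 := Complex.exp_ne_zero _
  field_simp
  ring_nf
  field_simp
  ring

lemma farField_continuous {n : ℕ} (f : EuclideanSpace ℝ (Fin n) → ℂ)
    (hf : Integrable f) (xhat : EuclideanSpace ℝ (Fin n)) :
    Continuous (farField f xhat) := by
  apply continuous_of_dominated (bound := fun y => ‖f y‖)
  · intro k
    apply AEStronglyMeasurable.mul _ hf.1
    apply Continuous.aestronglyMeasurable
    have h1 : Continuous fun y : EuclideanSpace ℝ (Fin n) => (⟪xhat, y⟫ : ℝ) :=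
      continuous_const.inner continuous_id
    exact Complex.continuous_exp.comp
      ((continuous_const.mul (Complex.continuous_ofReal.comp h1)).neg)
  · intro k
    filter_upwards with y
    rw [norm_mul]
    have : ‖Complex.exp (-(Complex.I * (k : ℂ) * ((⟪xhat, y⟫ : ℝ) : ℂ)))‖ = 1 := by
      rw [Complex.norm_exp]
      simp
    rw [this, one_mul]
  · exact hf.norm
  · filter_upwards with y
    have h1 : Continuous fun k : ℝ => -(Complex.I * (k : ℂ) * ((⟪xhat, y⟫ : ℝ) : ℂ)) := by
      fun_prop
    exact (Complex.continuous_exp.comp h1).mul continuous_const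

lemma conj_intervalIntegral (a b : ℝ) (f : ℝ → ℂ) :
    ∫ k in a..b, starRingEnd ℂ (f k) = starRingEnd ℂ (∫ k in a..b, f k) := by
  unfold intervalIntegral
  rw [map_sub, ← integral_conj, ← integral_conj]

/-- The phaseless indicator of the direct sampling method equals twice the
real part of a superposition of the phased indicator at `z` and at the point
`2z₀ - z` symmetric to `z` about the reference point `z₀`. -/
theorem phaseless_indicator_identity
    (n : ℕ) (hn : 1 ≤ n) (kmin kmax : ℝ) (hk : 0 < kmin) (hkk : kmin < kmax)
    (f : EuclideanSpace ℝ (Fin n) → ℂ)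
    (hf : Integrable f) (hcs : HasCompactSupport f)
    (g : ℝ → ℂ) (hg : ContinuousOn g (Set.Icc kmin kmax))
    (xhat : EuclideanSpace ℝ (Fin n)) (hx : ‖xhat‖ = 1)
    (τ : ℂ) (z₀ z : EuclideanSpace ℝ (Fin n)) :
    ((∫ k in kmin..kmax,
        ((‖(g k * farField f xhat k
            + τ * Complex.exp (-(Complex.I * (k : ℂ) * ((⟪xhat, z₀⟫ : ℝ) : ℂ))))‖)^2
          - (‖g k * farField f xhat k‖)^2
          - (‖τ‖)^2)
          * Real.cos (k * (⟪xhat, z - z₀⟫ : ℝ)) : ℝ) : ℂ)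
      = (starRingEnd ℂ τ / 2)
          * (indicatorG kmin kmax f g xhat z
              + indicatorG kmin kmax f g xhat ((2 : ℝ) • z₀ - z))
        + starRingEnd ℂ ((starRingEnd ℂ τ / 2)
          * (indicatorG kmin kmax f g xhat z
              + indicatorG kmin kmax f g xhat ((2 : ℝ) • z₀ - z))) := by
  have hle : kmin ≤ kmax := hkk.le
  set a : ℝ := (⟪xhat, z₀⟫ : ℝ) with ha
  set c : ℝ := (⟪xhat, z⟫ : ℝ) with hc
  have hsub : (⟪xhat, z - z₀⟫ : ℝ) = c - a := by
    rw [inner_sub_right]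
  have hsym : (⟪xhat, (2 : ℝ) • z₀ - z⟫ : ℝ) = 2 * a - c := by
    rw [inner_sub_right, real_inner_smul_right]
  have hcont := farField_continuous f hf xhat
  set h : ℝ → ℂ := fun k => g k * farField f xhat k with hh
  have hhc : ContinuousOn h (Set.uIcc kmin kmax) := by
    rw [Set.uIcc_of_le hle]
    exact hg.mul hcont.continuousOn
  have contA : ∀ r : ℝ, ContinuousOn
      (fun k : ℝ => h k * Complex.exp (Complex.I * (k : ℂ) * ((r : ℝ) : ℂ)))
      (Set.uIcc kmin kmax) :=
    fun r => hhc.mul (Continuous.continuousOn (by fun_prop))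
  have intA : ∀ r : ℝ, IntervalIntegrable
      (fun k : ℝ => h k * Complex.exp (Complex.I * (k : ℂ) * ((r : ℝ) : ℂ)))
      volume kmin kmax :=
    fun r => (contA r).intervalIntegrable
  set W : ℝ → ℂ := fun k => (starRingEnd ℂ τ / 2)
      * (h k * Complex.exp (Complex.I * (k : ℂ) * ((c : ℝ) : ℂ))
          + h k * Complex.exp (Complex.I * (k : ℂ) * ((2 * a - c : ℝ) : ℂ))) with hWdef
  have hWcont : ContinuousOn W (Set.uIcc kmin kmax) :=
    continuousOn_const.mul ((contA c).add (contA (2 * a - c)))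
  have hW : IntervalIntegrable W volume kmin kmax := hWcont.intervalIntegrable
  have hWc : IntervalIntegrable (fun k => starRingEnd ℂ (W k)) volume kmin kmax := by
    have : ContinuousOn (fun k => starRingEnd ℂ (W k)) (Set.uIcc kmin kmax) := by
      simpa only [starRingEnd_apply] using hWcont.star
    exact this.intervalIntegrable
  rw [← intervalIntegral.integral_ofReal]
  rw [intervalIntegral.integral_congr (g := fun k => W k + starRingEnd ℂ (W k))
      (fun k _ => by rw [hsub]; exact key_pointwise k a c (h k) τ)]
  rw [intervalIntegral.integral_add hW hWc, conj_intervalIntegral]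
  have hWint : (∫ k in kmin..kmax, W k)
      = (starRingEnd ℂ τ / 2)
          * (indicatorG kmin kmax f g xhat z
              + indicatorG kmin kmax f g xhat ((2 : ℝ) • z₀ - z)) := by
    rw [hWdef]
    rw [intervalIntegral.integral_const_mul,
      intervalIntegral.integral_add (intA c) (intA (2 * a - c))]
    simp only [indicatorG, hsym, ← hc, hh]
  rw [hWint]
end
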